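/- arXiv:1103.1511 — 8 statements merged into one kernel-verified Lean document; each statement's English description precedes it below -/
import Mathlib

section
/- Let C be a real symmetric n×n matrix with spectral decomposition C = U Diag(λ₁,…,λₙ) Uᵀ, where U is an orthogonal matrix and λ₁,…,λₙ are the eigenvalues of C. Then the matrix X* = U Diag(max(0,λ₁),…,max(0,λₙ)) Uᵀ is positive semidefinite and satisfies ‖X* − C‖ ≤ ‖X − C‖ for every positive semidefinite symmetric n×n matrix X, with equality only if X = X*; i.e., X* is the unique projection of C onto the cone of positive semidefinite matrices in the Frobenius norm. -/
open scoped Matrix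
open Finset

private lemma fro_norm_eq_sqrt {n : ℕ} (A : Matrix (Fin n) (Fin n) ℝ) :
    @norm _ Matrix.frobeniusSeminormedAddCommGroup.toNorm A
      = Real.sqrt (∑ i, ∑ j, (A i j)^2) := by
  rw [Matrix.frobenius_norm_def, ← Real.sqrt_eq_rpow]
  congr 1
  refine Finset.sum_congr rfl fun i _ => Finset.sum_congr rfl fun j _ => ?_
  rw [show (2:ℝ) = ((2:ℕ):ℝ) by norm_num, Real.rpow_natCast, Real.norm_eq_abs, sq_abs]

private lemma fsq_eq_trace {n : ℕ} (A : Matrix (Fin n) (Fin n) ℝ) :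
    (∑ i, ∑ j, (A i j)^2) = Matrix.trace (Aᵀ * A) := by
  simp only [Matrix.trace, Matrix.diag_apply, Matrix.mul_apply, Matrix.transpose_apply, sq]
  rw [Finset.sum_comm]

private lemma fsq_conj {n : ℕ} (U M : Matrix (Fin n) (Fin n) ℝ)
    (h1 : U * Uᵀ = 1) (h2 : Uᵀ * U = 1) :
    (∑ i, ∑ j, ((U * M * Uᵀ) i j)^2) = ∑ i, ∑ j, (M i j)^2 := by
  rw [fsq_eq_trace, fsq_eq_trace]
  have : (U * M * Uᵀ)ᵀ * (U * M * Uᵀ) = U * (Mᵀ * M) * Uᵀ := by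
    simp only [Matrix.transpose_mul, Matrix.transpose_transpose, Matrix.mul_assoc]
    rw [show Uᵀ * (U * (M * Uᵀ)) = M * Uᵀ by rw [← Matrix.mul_assoc, h2, Matrix.one_mul]]
  rw [this, Matrix.trace_mul_cycle, ← Matrix.mul_assoc, h2, Matrix.one_mul]

set_option maxHeartbeats 1000000 in
/-- The projection of a real symmetric matrix `C = U Diag(λ) Uᵀ` onto the cone of
positive semidefinite matrices, in the Frobenius norm, is
`X* = U Diag(max 0 λ) Uᵀ`: it is positive semidefinite, it is at least as close to `C`
as any positive semidefinite symmetric matrix `X`, with equality of distances only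
when `X = X*`. -/
theorem psd_projection_spectral
    {n : ℕ} (C U : Matrix (Fin n) (Fin n) ℝ) (L : Fin n → ℝ)
    (hC : C.IsSymm)
    (hU : U ∈ Matrix.orthogonalGroup (Fin n) ℝ)
    (hdecomp : C = U * Matrix.diagonal L * Uᵀ)
    (Xstar : Matrix (Fin n) (Fin n) ℝ)
    (hXstar : Xstar = U * Matrix.diagonal (fun i => max 0 (L i)) * Uᵀ) :
    Xstar.PosSemidef ∧
      ∀ X : Matrix (Fin n) (Fin n) ℝ, X.IsSymm → X.PosSemidef →
        (@norm _ Matrix.frobeniusSeminormedAddCommGroup.toNorm (Xstar - C)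
            ≤ @norm _ Matrix.frobeniusSeminormedAddCommGroup.toNorm (X - C)) ∧
          (@norm _ Matrix.frobeniusSeminormedAddCommGroup.toNorm (X - C)
              = @norm _ Matrix.frobeniusSeminormedAddCommGroup.toNorm (Xstar - C)
            → X = Xstar) := by
  classical
  -- orthogonality facts
  have h1 : U * Uᵀ = 1 := by
    have h := (Matrix.mem_orthogonalGroup_iff _ _).mp hU
    exact h
  have h2 : Uᵀ * U = 1 := by
    have h := (Matrix.mem_orthogonalGroup_iff' _ _).mp hU
    exact h
  set P : Fin n → ℝ := fun i => max 0 (L i) with hP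
  have hPnn : ∀ i, 0 ≤ P i := fun i => le_max_left _ _
  set D : Matrix (Fin n) (Fin n) ℝ := Matrix.diagonal L with hD
  set Dp : Matrix (Fin n) (Fin n) ℝ := Matrix.diagonal P with hDp
  have hUH : Uᴴ = Uᵀ := Matrix.conjTranspose_eq_transpose_of_trivial U
  -- Xstar is PSD
  have hXstarPSD : Xstar.PosSemidef := by
    rw [hXstar]
    have := (Matrix.PosSemidef.diagonal (fun i => hPnn i) :
      (Matrix.diagonal P).PosSemidef).mul_mul_conjTranspose_same U
    rwa [hUH] at this
  refine ⟨hXstarPSD, fun X hXsymm hXpsd => ?_⟩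
  set Y : Matrix (Fin n) (Fin n) ℝ := Uᵀ * X * U with hY
  have hXY : X = U * Y * Uᵀ := by
    rw [hY]
    calc X = (U * Uᵀ) * X * (U * Uᵀ) := by rw [h1, Matrix.one_mul, Matrix.mul_one]
      _ = U * (Uᵀ * X * U) * Uᵀ := by simp only [Matrix.mul_assoc]
  have hYpsd : Y.PosSemidef := by
    have := hXpsd.conjTranspose_mul_mul_same U
    rwa [hUH] at this
  have hYdiag : ∀ i, 0 ≤ Y i i := by
    intro i
    exact hYpsd.diag_nonneg
  -- difference matrices
  have hXC : X - C = U * (Y - D) * Uᵀ := by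
    rw [hXY, hdecomp, Matrix.mul_sub, Matrix.sub_mul]
  have hXstarC : Xstar - C = U * (Dp - D) * Uᵀ := by
    rw [hXstar, hdecomp, Matrix.mul_sub, Matrix.sub_mul]
  -- norms as square roots
  have hn1 : @norm _ Matrix.frobeniusSeminormedAddCommGroup.toNorm (X - C)

      = Real.sqrt (∑ i, ∑ j, ((Y - D) i j)^2) := by
    rw [hXC, fro_norm_eq_sqrt, fsq_conj U _ h1 h2]
  have hn2 : @norm _ Matrix.frobeniusSeminormedAddCommGroup.toNorm (Xstar - C)
      = Real.sqrt (∑ i, ∑ j, ((Dp - D) i j)^2) := by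
    rw [hXstarC, fro_norm_eq_sqrt, fsq_conj U _ h1 h2]
  -- entries of the diagonal difference
  have hDpD : ∀ i j, (Dp - D) i j = if i = j then P i - L i else 0 := by
    intro i j
    by_cases h : i = j <;> simp [hDp, hD, Matrix.diagonal_apply, h]
  have hfsqDpD : (∑ i, ∑ j, ((Dp - D) i j)^2) = ∑ i, (P i - L i)^2 := by
    refine Finset.sum_congr rfl fun i _ => ?_
    rw [show (fun j => ((Dp - D) i j)^2)
        = fun j => if i = j then (P i - L i)^2 else 0 by
      funext j; rw [hDpD]; by_cases h : i = j <;> simp [h]]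
    simp
  have hYD : ∀ i j, (Y - D) i j = Y i j - if i = j then L i else 0 := by
    intro i j
    by_cases h : i = j <;> simp [hD, Matrix.diagonal_apply, h]
  -- pointwise bounds
  have hrow : ∀ i, (P i - L i)^2 ≤ ∑ j, ((Y - D) i j)^2 := by
    intro i
    have hterm : (P i - L i)^2 ≤ ((Y - D) i i)^2 := by
      rw [hYD i i, if_pos rfl]
      have hy := hYdiag i
      rcases le_total 0 (L i) with h | h
      · have hPi : P i = L i := max_eq_right h
        rw [hPi]; nlinarith
      · have hPi : P i = 0 := max_eq_left h
        rw [hPi]; nlinarith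
    calc (P i - L i)^2 ≤ ((Y - D) i i)^2 := hterm
      _ ≤ ∑ j, ((Y - D) i j)^2 :=
        Finset.single_le_sum (f := fun j => ((Y - D) i j)^2)
          (fun j _ => sq_nonneg _) (Finset.mem_univ i)
  have hkey : (∑ i, ∑ j, ((Dp - D) i j)^2) ≤ ∑ i, ∑ j, ((Y - D) i j)^2 := by
    rw [hfsqDpD]
    exact Finset.sum_le_sum fun i _ => hrow i
  constructor
  · rw [hn1, hn2]
    exact Real.sqrt_le_sqrt hkey
  · intro hEqNorm
    rw [hn1, hn2] at hEqNorm
    have hfs : (∑ i, ∑ j, ((Y - D) i j)^2) = ∑ i, ∑ j, ((Dp - D) i j)^2 := by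
      have hA : (0:ℝ) ≤ ∑ i, ∑ j, ((Y - D) i j)^2 := by positivity
      have hB : (0:ℝ) ≤ ∑ i, ∑ j, ((Dp - D) i j)^2 := by positivity
      exact (Real.sqrt_inj hA hB).mp hEqNorm
    rw [hfsqDpD] at hfs
    -- rowwise equality
    have hroweq : ∀ i ∈ Finset.univ,
        (∑ j, ((Y - D) i j)^2) = (P i - L i)^2 := by
      have h := (Finset.sum_eq_sum_iff_of_le (fun i _ => hrow i)).mp hfs.symm
      intro i hi
      exact (h i hi).symm
    have hYeq : Y = Dp := by
      ext i j
      have hre := hroweq i (Finset.mem_univ i)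
      have hterm : (P i - L i)^2 ≤ ((Y - D) i i)^2 := by
        rw [hYD i i, if_pos rfl]
        have hy := hYdiag i
        rcases le_total 0 (L i) with h | h
        · have hPi : P i = L i := max_eq_right h
          rw [hPi]; nlinarith
        · have hPi : P i = 0 := max_eq_left h
          rw [hPi]; nlinarith
      have hsplit : ((Y - D) i i)^2 + ∑ j ∈ Finset.univ.erase i, ((Y - D) i j)^2
          = ∑ j, ((Y - D) i j)^2 :=
        Finset.add_sum_erase Finset.univ (fun j => ((Y - D) i j)^2) (Finset.mem_univ i)
      have herasenn : (0:ℝ) ≤ ∑ j ∈ Finset.univ.erase i, ((Y - D) i j)^2 :=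
        Finset.sum_nonneg fun j _ => sq_nonneg _
      have hie : ((Y - D) i i)^2 = (P i - L i)^2 ∧
          (∑ j ∈ Finset.univ.erase i, ((Y - D) i j)^2) = 0 := by
        constructor <;> linarith [hre, hsplit, hterm, herasenn]
      by_cases h : i = j
      · subst h
        have hdd : (Y i i - L i)^2 = (P i - L i)^2 := by
          have := hie.1; rwa [hYD i i, if_pos rfl] at this
        have hy := hYdiag i
        have : Y i i = P i := by
          rcases le_total 0 (L i) with hl | hl
          · have hPi : P i = L i := max_eq_right hl
            rw [hPi] at hdd
            have h0 : (Y i i - L i)^2 = 0 := by linear_combination hdd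
            have := pow_eq_zero_iff (n := 2) (by norm_num) |>.mp h0
            rw [hPi]; linarith [sub_eq_zero.mp this]
          · have hPi : P i = 0 := max_eq_left hl
            rw [hPi] at hdd
            rw [hPi]
            have hmul : Y i i * (Y i i - 2 * L i) = 0 := by linear_combination hdd
            rcases mul_eq_zero.mp hmul with h0 | h0
            · exact h0
            · have : Y i i = 2 * L i := by linarith
              linarith
        rw [hDp, Matrix.diagonal_apply_eq]
        exact this
      · have hz : ((Y - D) i j)^2 = 0 := by
          have := (Finset.sum_eq_zero_iff_of_nonneg
            (fun j _ => sq_nonneg ((Y - D) i j))).mp hie.2 j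
            (Finset.mem_erase.mpr ⟨fun hji => h hji.symm, Finset.mem_univ j⟩)
          exact this
        have : (Y - D) i j = 0 := by
          exact pow_eq_zero_iff (n := 2) (by norm_num) |>.mp hz
        rw [hYD i j, if_neg h, sub_zero] at this
        rw [hDp, Matrix.diagonal_apply_ne _ h]
        exact this
    rw [hXY, hYeq, hXstar]
end

section
/- Let K be a nonempty closed convex cone in ℝⁿ, let c ∈ ℝⁿ, A ∈ ℝ^{m×n}, b ∈ ℝᵐ. Define the dual function θ(y) = inf over x ∈ K of [½‖c − x‖² − ⟨y, Ax − b⟩]. Then for every y ∈ ℝᵐ, θ(y) = ⟨b, y⟩ + ½(‖c‖² − ‖x(y)‖²), where x(y) = proj_K(c + Aᵀy). -/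
open scoped Matrix RealInnerProductSpace

/-- Matrix-vector multiplication, viewed as a map between Euclidean spaces. -/
noncomputable def mulVecE {m n : ℕ} (A : Matrix (Fin m) (Fin n) ℝ)
    (x : EuclideanSpace ℝ (Fin n)) : EuclideanSpace ℝ (Fin m) :=
  WithLp.toLp 2 (A.mulVec x)

lemma inner_mulVecE {m n : ℕ} (A : Matrix (Fin m) (Fin n) ℝ)
    (y : EuclideanSpace ℝ (Fin m)) (x : EuclideanSpace ℝ (Fin n)) :
    ⟪y, mulVecE A x⟫ = ⟪mulVecE Aᵀ y, x⟫ := by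
  simp only [mulVecE, PiLp.inner_apply, RCLike.inner_apply, conj_trivial,
    PiLp.toLp_apply, Matrix.mulVec, dotProduct, Matrix.transpose_apply, Finset.mul_sum,
    Finset.sum_mul]
  rw [Finset.sum_comm]
  congr 1; ext i; congr 1; ext j; ring

set_option maxHeartbeats 1000000 in
/-- For a nonempty closed convex cone `K ⊆ ℝⁿ`, the dual function
`θ(y) = inf_{x ∈ K} [½‖c − x‖² − ⟨y, Ax − b⟩]` has the explicit expression
`θ(y) = ⟨b, y⟩ + ½(‖c‖² − ‖x(y)‖²)` where `x(y) = proj_K (c + Aᵀ y)`. -/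
theorem dual_function_value
    {m n : ℕ} (K : Set (EuclideanSpace ℝ (Fin n)))
    (hKne : K.Nonempty) (hKcl : IsClosed K) (hKconv : Convex ℝ K)
    (hKcone : ∀ x ∈ K, ∀ t : ℝ, 0 ≤ t → t • x ∈ K)
    (projK : EuclideanSpace ℝ (Fin n) → EuclideanSpace ℝ (Fin n))
    (hprojK : ∀ w, projK w ∈ K ∧ ∀ v ∈ K, ‖w - projK w‖ ≤ ‖w - v‖)
    (c : EuclideanSpace ℝ (Fin n)) (A : Matrix (Fin m) (Fin n) ℝ)
    (b : EuclideanSpace ℝ (Fin m)) :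
    ∀ y : EuclideanSpace ℝ (Fin m),
      sInf ((fun x => (1 / 2) * ‖c - x‖ ^ 2 - ⟪y, mulVecE A x - b⟫) '' K)
        = ⟪b, y⟫ + (1 / 2) * (‖c‖ ^ 2 - ‖projK (c + mulVecE Aᵀ y)‖ ^ 2) := by
  intro y
  set u : EuclideanSpace ℝ (Fin n) := mulVecE Aᵀ y with hu
  set w : EuclideanSpace ℝ (Fin n) := c + u with hw
  set p : EuclideanSpace ℝ (Fin n) := projK w with hp
  obtain ⟨hpK, hple⟩ := hprojK w
  -- the variational inequality
  have hiInf : ‖w - p‖ = ⨅ v : K, ‖w - v‖ := by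
    haveI : Nonempty K := ⟨⟨p, hpK⟩⟩
    have hbdd : BddBelow (Set.range fun v : K => ‖w - (v : EuclideanSpace ℝ (Fin n))‖) := by
      refine ⟨0, ?_⟩
      rintro z ⟨v, rfl⟩
      exact norm_nonneg _
    refine le_antisymm (le_ciInf fun v => hple v v.2) ?_
    exact ciInf_le hbdd ⟨p, hpK⟩
  have hvar : ∀ v ∈ K, ⟪w - p, v - p⟫ ≤ 0 :=
    (norm_eq_iInf_iff_real_inner_le_zero hKconv hpK).1 hiInf
  have h0K : (0 : EuclideanSpace ℝ (Fin n)) ∈ K := by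
    obtain ⟨x0, hx0⟩ := hKne
    simpa using hKcone x0 hx0 0 le_rfl
  have h2p : (2 : ℝ) • p ∈ K := hKcone p hpK 2 (by norm_num)
  have horth : ⟪w - p, p⟫ = 0 := by
    have h1 := hvar _ h2p
    have h2 := hvar _ h0K
    have e1 : (2 : ℝ) • p - p = p := by
      rw [two_smul]; abel
    have e2 : (0 : EuclideanSpace ℝ (Fin n)) - p = -p := by abel
    rw [e1] at h1
    rw [e2, inner_neg_right] at h2
    linarith
  have hwp : ⟪w, p⟫ = ‖p‖ ^ 2 := by
    have := horth
    rw [inner_sub_left] at this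
    have hps : ⟪p, p⟫ = ‖p‖ ^ 2 := real_inner_self_eq_norm_sq p
    linarith
  -- the objective function as a quadratic around w
  set C : ℝ := ⟪b, y⟫ + (1 / 2) * ‖c‖ ^ 2 - (1 / 2) * ‖w‖ ^ 2 with hC
  have hid : ∀ x : EuclideanSpace ℝ (Fin n),
      (1 / 2) * ‖c - x‖ ^ 2 - ⟪y, mulVecE A x - b⟫
        = (1 / 2) * ‖w - x‖ ^ 2 + C := by
    intro x
    rw [inner_sub_right, inner_mulVecE, ← hu]
    have e1 : ‖c - x‖ ^ 2 = ‖c‖ ^ 2 - 2 * ⟪c, x⟫ + ‖x‖ ^ 2 := norm_sub_sq_real c x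
    have e2 : ‖w - x‖ ^ 2 = ‖w‖ ^ 2 - 2 * ⟪w, x⟫ + ‖x‖ ^ 2 := norm_sub_sq_real w x
    have e3 : ⟪w, x⟫ = ⟪c, x⟫ + ⟪u, x⟫ := by rw [hw, inner_add_left]
    have e4 : ⟪y, b⟫ = ⟪b, y⟫ := real_inner_comm b y
    rw [e1, e2, e3, e4, hC]; ring
  have hleast : IsLeast ((fun x => (1 / 2) * ‖c - x‖ ^ 2 - ⟪y, mulVecE A x - b⟫) '' K)
      ((1 / 2) * ‖c - p‖ ^ 2 - ⟪y, mulVecE A p - b⟫) := by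
    constructor
    · exact ⟨p, hpK, rfl⟩
    · rintro z ⟨x, hxK, rfl⟩
      simp only []
      rw [hid x, hid p]
      have h1 : ‖w - p‖ ≤ ‖w - x‖ := hple x hxK
      have h2 : ‖w - p‖ ^ 2 ≤ ‖w - x‖ ^ 2 :=
        pow_le_pow_left₀ (norm_nonneg _) h1 2
      linarith
  rw [hleast.csInf_eq, hid p]
  have e5 : ‖w - p‖ ^ 2 = ‖w‖ ^ 2 - 2 * ⟪w, p⟫ + ‖p‖ ^ 2 := norm_sub_sq_real w p
  rw [e5, hwp, hC]; ring
end

section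
/- Let K be a nonempty closed convex cone in ℝⁿ, let c ∈ ℝⁿ, A ∈ ℝ^{m×n}, b ∈ ℝᵐ, and define θ(y) = ⟨b, y⟩ + ½(‖c‖² − ‖proj_K(c + Aᵀy)‖²) for y ∈ ℝᵐ. Then θ is concave on ℝᵐ and differentiable at every y ∈ ℝᵐ, with gradient ∇θ(y) = b − A·proj_K(c + Aᵀy). -/
open scoped Matrix RealInnerProductSpace

set_option maxHeartbeats 1000000 in
/-- For a nonempty closed convex cone `K ⊆ ℝⁿ`, the dual function
`θ(y) = ⟨b, y⟩ + ½(‖c‖² − ‖proj_K(c + Aᵀy)‖²)` is concave on `ℝᵐ` and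
differentiable everywhere, with gradient `∇θ(y) = b − A·proj_K(c + Aᵀy)`. -/
theorem dual_function_concave_differentiable
    {m n : ℕ} (K : Set (EuclideanSpace ℝ (Fin n)))
    (hKne : K.Nonempty) (hKcl : IsClosed K) (hKconv : Convex ℝ K)
    (hKcone : ∀ x ∈ K, ∀ t : ℝ, 0 ≤ t → t • x ∈ K)
    (projK : EuclideanSpace ℝ (Fin n) → EuclideanSpace ℝ (Fin n))
    (hprojK : ∀ w, projK w ∈ K ∧ ∀ v ∈ K, ‖w - projK w‖ ≤ ‖w - v‖)
    (c : EuclideanSpace ℝ (Fin n)) (A : Matrix (Fin m) (Fin n) ℝ)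
    (b : EuclideanSpace ℝ (Fin m))
    (θ : EuclideanSpace ℝ (Fin m) → ℝ)
    (hθ : ∀ y, θ y = ⟪b, y⟫ + (1 / 2) * (‖c‖ ^ 2 - ‖projK (c + mulVecE Aᵀ y)‖ ^ 2)) :
    ConcaveOn ℝ Set.univ θ ∧
      ∀ y : EuclideanSpace ℝ (Fin m),
        HasGradientAt θ (b - mulVecE A (projK (c + mulVecE Aᵀ y))) y := by
  have hPmem : ∀ w, projK w ∈ K := fun w => (hprojK w).1
  have hPmin : ∀ w, ∀ v ∈ K, ‖w - projK w‖ ≤ ‖w - v‖ := fun w => (hprojK w).2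
  -- variational inequality
  have hvar : ∀ w, ∀ v ∈ K, ⟪w - projK w, v - projK w⟫ ≤ 0 := by
    intro w
    haveI : Nonempty K := ⟨⟨projK w, hPmem w⟩⟩
    rw [← norm_eq_iInf_iff_real_inner_le_zero hKconv (hPmem w)]
    have hbdd : BddBelow (Set.range fun v : K => ‖w - (v : EuclideanSpace ℝ (Fin n))‖) := by
      refine ⟨0, ?_⟩
      rintro x ⟨v, rfl⟩
      exact norm_nonneg _
    refine le_antisymm (le_ciInf fun v => hPmin w v v.2) ?_
    exact ciInf_le hbdd ⟨projK w, hPmem w⟩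
  -- orthogonality on the cone
  have horth : ∀ w, ⟪w - projK w, projK w⟫ = 0 := by
    intro w
    have h1 := hvar w ((2 : ℝ) • projK w) (hKcone _ (hPmem w) 2 (by norm_num))
    have h2 := hvar w ((0 : ℝ) • projK w) (hKcone _ (hPmem w) 0 le_rfl)
    rw [two_smul] at h1
    rw [zero_smul, zero_sub, inner_neg_right] at h2
    have h1' : ⟪w - projK w, projK w⟫ ≤ 0 := by
      have : projK w + projK w - projK w = projK w := by abel
      rwa [this] at h1
    linarith
  have hinnerP : ∀ w, ⟪w, projK w⟫ = ‖projK w‖ ^ 2 := by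
    intro w
    have h := horth w
    rw [inner_sub_left, real_inner_self_eq_norm_sq] at h
    linarith
  -- key inequality : ⟪w, v⟫ - ‖v‖²/2 ≤ ‖projK w‖²/2 for v ∈ K
  have hkey : ∀ w, ∀ v ∈ K, ⟪w, v⟫ - ‖v‖ ^ 2 / 2 ≤ ‖projK w‖ ^ 2 / 2 := by
    intro w v hv
    have h : ‖w - projK w‖ ^ 2 ≤ ‖w - v‖ ^ 2 :=
      pow_le_pow_left₀ (norm_nonneg _) (hPmin w v hv) 2
    rw [norm_sub_sq_real, norm_sub_sq_real, hinnerP w] at h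
    linarith
  -- subgradient inequality
  have hsub : ∀ w w', ⟪w' - w, projK w⟫ ≤ ‖projK w'‖ ^ 2 / 2 - ‖projK w‖ ^ 2 / 2 := by
    intro w w'
    have h := hkey w' (projK w) (hPmem w)
    have h2 := hinnerP w
    rw [inner_sub_left] at *
    linarith
  -- nonexpansiveness
  have hlip : ∀ w w', ‖projK w' - projK w‖ ≤ ‖w' - w‖ := by
    intro w w'
    have h1 := hvar w (projK w') (hPmem w')
    have h2 := hvar w' (projK w) (hPmem w)
    have key : ‖projK w' - projK w‖ ^ 2 ≤ ⟪w' - w, projK w' - projK w⟫ := by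
      have e1 : ⟪w' - w, projK w' - projK w⟫
          = ⟪w' - projK w', projK w' - projK w⟫ + ⟪projK w' - projK w, projK w' - projK w⟫
            + ⟪projK w - w, projK w' - projK w⟫ := by
        rw [← inner_add_left, ← inner_add_left]; congr 1; abel
      have e2 : ⟪w' - projK w', projK w' - projK w⟫ ≥ 0 := by
        have := h2
        rw [show projK w - projK w' = -(projK w' - projK w) by abel, inner_neg_right] at this
        linarith
      have e3 : ⟪projK w - w, projK w' - projK w⟫ ≥ 0 := by
        rw [show projK w - w = -(w - projK w) by abel, inner_neg_left]
        linarith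
      rw [e1, real_inner_self_eq_norm_sq]
      linarith
    have h3 : ⟪w' - w, projK w' - projK w⟫ ≤ ‖w' - w‖ * ‖projK w' - projK w‖ :=
      real_inner_le_norm _ _
    nlinarith [norm_nonneg (projK w' - projK w), norm_nonneg (w' - w)]
  -- quadratic error bound
  have hquad : ∀ w w',
      |‖projK w'‖ ^ 2 / 2 - ‖projK w‖ ^ 2 / 2 - ⟪projK w, w' - w⟫| ≤ ‖w' - w‖ ^ 2 := by
    intro w w'
    have h1 := hsub w w'
    have h2 := hsub w' w
    rw [real_inner_comm] at h1
    rw [show w - w' = -(w' - w) by abel, inner_neg_left, real_inner_comm] at h2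
    have h3 : ⟪projK w', w' - w⟫ - ⟪projK w, w' - w⟫ ≤ ‖w' - w‖ ^ 2 := by
      have e : ⟪projK w', w' - w⟫ - ⟪projK w, w' - w⟫ = ⟪projK w' - projK w, w' - w⟫ := by
        rw [inner_sub_left]
      have := real_inner_le_norm (projK w' - projK w) (w' - w)
      have hl := hlip w w'
      nlinarith [norm_nonneg (w' - w)]
    rw [abs_le]
    constructor <;> nlinarith [sq_nonneg (‖w' - w‖)]
  -- linear algebra facts
  have hlin : ∀ (a bb : ℝ) (x y : EuclideanSpace ℝ (Fin m)),
      mulVecE Aᵀ (a • x + bb • y) = a • mulVecE Aᵀ x + bb • mulVecE Aᵀ y := by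
    intro a bb x y
    ext i
    simp [mulVecE, Matrix.mulVec, dotProduct, Finset.mul_sum]
    rw [← Finset.sum_add_distrib]
    exact Finset.sum_congr rfl fun j _ => by ring
  have hsubv : ∀ (x y : EuclideanSpace ℝ (Fin m)),
      mulVecE Aᵀ x - mulVecE Aᵀ y = mulVecE Aᵀ (x - y) := by
    intro x y
    ext i
    simp [mulVecE, Matrix.mulVec, dotProduct, mul_sub, Finset.sum_sub_distrib]
  have hadj : ∀ (u : EuclideanSpace ℝ (Fin n)) (y : EuclideanSpace ℝ (Fin m)),
      ⟪mulVecE A u, y⟫ = ⟪u, mulVecE Aᵀ y⟫ := by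
    intro u y
    simp [mulVecE, PiLp.inner_apply, Matrix.mulVec, dotProduct, Finset.mul_sum,
      Finset.sum_mul]
    rw [Finset.sum_comm]
    congr 1; ext i; congr 1; ext j; ring
  obtain ⟨T, hT⟩ : ∃ T : EuclideanSpace ℝ (Fin m) →L[ℝ] EuclideanSpace ℝ (Fin n),
      ∀ y, T y = mulVecE Aᵀ y :=
    ⟨LinearMap.toContinuousLinearMap (Matrix.toEuclideanLin Aᵀ), fun y => rfl⟩
  have hTle : ∀ z : EuclideanSpace ℝ (Fin m), ‖mulVecE Aᵀ z‖ ≤ ‖T‖ * ‖z‖ := by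
    intro z; rw [← hT]; exact T.le_opNorm z
  constructor
  · -- concavity
    refine ⟨convex_univ, ?_⟩
    intro x _ y _ a bb ha hbb hab
    set w1 := c + mulVecE Aᵀ x with hw1
    set w2 := c + mulVecE Aᵀ y with hw2
    set wz := c + mulVecE Aᵀ (a • x + bb • y) with hwz
    have hwze : wz = a • w1 + bb • w2 := by
      have e : a • w1 + bb • w2
          = (a + bb) • c + (a • mulVecE Aᵀ x + bb • mulVecE Aᵀ y) := by
        rw [hw1, hw2]; module
      rw [e, hab, one_smul, hwz, hlin]
    set v := projK wz with hv_def
    have hv := hPmem wz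
    have h1 := hkey w1 v hv
    have h2 := hkey w2 v hv
    have h0 : ⟪wz, v⟫ = ‖v‖ ^ 2 := hinnerP wz
    have hexp : ⟪wz, v⟫ = a * ⟪w1, v⟫ + bb * ⟪w2, v⟫ := by
      rw [hwze, inner_add_left, real_inner_smul_left, real_inner_smul_left]
    have hb3 : ⟪b, a • x + bb • y⟫ = a * ⟪b, x⟫ + bb * ⟪b, y⟫ := by
      rw [inner_add_right, real_inner_smul_right, real_inner_smul_right]
    have hvals : ‖v‖ ^ 2 ≤ a * ‖projK w1‖ ^ 2 + bb * ‖projK w2‖ ^ 2 := by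
      nlinarith [mul_le_mul_of_nonneg_left h1 ha, mul_le_mul_of_nonneg_left h2 hbb]
    have hc : a * ‖c‖ ^ 2 + bb * ‖c‖ ^ 2 = ‖c‖ ^ 2 := by
      rw [← add_mul, hab, one_mul]
    simp only [smul_eq_mul]
    rw [hθ x, hθ y, hθ (a • x + bb • y)]
    rw [← hw1, ← hw2, ← hwz, ← hv_def, hb3]
    nlinarith [hvals, hc]
  · -- differentiability / gradient
    intro y
    rw [hasGradientAt_iff_isLittleO, Asymptotics.isLittleO_iff]
    intro ε hε
    have hC : (0 : ℝ) ≤ ‖T‖ := norm_nonneg _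
    have hδ : (0 : ℝ) < ε / (‖T‖ ^ 2 + 1) := by positivity
    filter_upwards [Metric.ball_mem_nhds y hδ] with y' hy'
    rw [Metric.mem_ball, dist_eq_norm] at hy'
    set w := c + mulVecE Aᵀ y with hw_def
    set w' := c + mulVecE Aᵀ y' with hw'_def
    have hww : w' - w = mulVecE Aᵀ (y' - y) := by
      rw [hw_def, hw'_def, add_sub_add_left_eq_sub, hsubv]
    have hq := hquad w w'
    have hbound : ‖w' - w‖ ≤ ‖T‖ * ‖y' - y‖ := by rw [hww]; exact hTle _
    have hinner : ⟪b - mulVecE A (projK w), y' - y⟫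
        = ⟪b, y' - y⟫ - ⟪projK w, w' - w⟫ := by
      rw [inner_sub_left, hadj, hww]
    have hθd : θ y' - θ y
        = ⟪b, y' - y⟫ - (‖projK w'‖ ^ 2 / 2 - ‖projK w‖ ^ 2 / 2) := by
      rw [hθ y', hθ y, ← hw_def, ← hw'_def, inner_sub_right]
      ring
    have herr : θ y' - θ y - ⟪b - mulVecE A (projK w), y' - y⟫
        = -(‖projK w'‖ ^ 2 / 2 - ‖projK w‖ ^ 2 / 2 - ⟪projK w, w' - w⟫) := by
      rw [hθd, hinner]; ring
    rw [Real.norm_eq_abs, herr, abs_neg]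
    have h1 : |‖projK w'‖ ^ 2 / 2 - ‖projK w‖ ^ 2 / 2 - ⟪projK w, w' - w⟫|
        ≤ (‖T‖ * ‖y' - y‖) ^ 2 := by
      refine hq.trans ?_
      exact pow_le_pow_left₀ (norm_nonneg _) hbound 2
    refine h1.trans ?_
    have hyn : (0 : ℝ) ≤ ‖y' - y‖ := norm_nonneg _
    have key : ‖T‖ ^ 2 * ‖y' - y‖ ≤ ε := by
      have h2 : ‖T‖ ^ 2 * ‖y' - y‖ ≤ ‖T‖ ^ 2 * (ε / (‖T‖ ^ 2 + 1)) :=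
        mul_le_mul_of_nonneg_left hy'.le (by positivity)
      have h3 : ‖T‖ ^ 2 * (ε / (‖T‖ ^ 2 + 1)) ≤ ε := by
        rw [div_eq_mul_inv]
        have : ‖T‖ ^ 2 * (ε * (‖T‖ ^ 2 + 1)⁻¹) = ε * (‖T‖ ^ 2 / (‖T‖ ^ 2 + 1)) := by
          ring
        rw [this]
        nlinarith [div_le_one_of_le₀ (by nlinarith : ‖T‖ ^ 2 ≤ ‖T‖ ^ 2 + 1) (by positivity : (0:ℝ) ≤ ‖T‖ ^ 2 + 1), hε.le]
      linarith
    calc (‖T‖ * ‖y' - y‖) ^ 2 = (‖T‖ ^ 2 * ‖y' - y‖) * ‖y' - y‖ := by ring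
    _ ≤ ε * ‖y' - y‖ := mul_le_mul_of_nonneg_right key hyn
end

section
/- Let K be a closed convex cone in ℝⁿ with nonempty interior and polar cone K° = {s ∈ ℝⁿ : ⟨s,x⟩ ≤ 0 for all x ∈ K}, let c ∈ ℝⁿ, A_E ∈ ℝ^{mE×n}, b_E ∈ ℝ^{mE}, A_I ∈ ℝ^{mI×n}, b_I ∈ ℝ^{mI}, and let P = {x : A_E x = b_E, A_I x ≤ b_I}. Assume the Slater condition: there exists x̄ in the interior of K with A_E x̄ = b_E and A_I x̄ ≤ b_I. Then x̄* ∈ ℝⁿ is the projection of c onto P ∩ K if and only if there exist y ∈ ℝ^{mE}, z ∈ ℝ₊^{mI} and u ∈ K° such that: x̄* − c + u + A_Eᵀy + A_Iᵀz = 0; A_E x̄* = b_E; A_I x̄* ≤ b_I with ⟨z, A_I x̄* − b_I⟩ = 0; and x̄* ∈ K with ⟨u, x̄*⟩ = 0. -/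
open scoped Matrix RealInnerProductSpace

lemma mulVecE_apply {m n : ℕ} (A : Matrix (Fin m) (Fin n) ℝ) (x : EuclideanSpace ℝ (Fin n))
    (i : Fin m) : mulVecE A x i = ∑ j, A i j * x j := rfl

lemma inner_mulVecE_transpose {m n : ℕ} (A : Matrix (Fin m) (Fin n) ℝ)
    (y : EuclideanSpace ℝ (Fin m)) (x : EuclideanSpace ℝ (Fin n)) :
    ⟪mulVecE Aᵀ y, x⟫ = ⟪y, mulVecE A x⟫ := by
  simp only [mulVecE, PiLp.inner_apply, RCLike.inner_apply, conj_trivial]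
  simp only [Matrix.mulVec, dotProduct, Matrix.transpose_apply, Finset.sum_mul,
    Finset.mul_sum]
  rw [Finset.sum_comm]
  congr 1; ext i; congr 1; ext j; ring

lemma mulVecE_add {m n : ℕ} (A : Matrix (Fin m) (Fin n) ℝ) (x y : EuclideanSpace ℝ (Fin n)) :
    mulVecE A (x + y) = mulVecE A x + mulVecE A y := by
  ext i
  simp [mulVecE_apply, PiLp.add_apply, mul_add, Finset.sum_add_distrib]

lemma mulVecE_smul {m n : ℕ} (A : Matrix (Fin m) (Fin n) ℝ) (t : ℝ) (x : EuclideanSpace ℝ (Fin n)) :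
    mulVecE A (t • x) = t • mulVecE A x := by
  ext i
  simp [mulVecE_apply, PiLp.smul_apply, Finset.mul_sum, mul_left_comm]

lemma mulVecE_zero {m n : ℕ} (A : Matrix (Fin m) (Fin n) ℝ) :
    mulVecE A (0 : EuclideanSpace ℝ (Fin n)) = 0 := by
  ext i
  simp [mulVecE_apply]


lemma mulVecE_sub {m n : ℕ} (A : Matrix (Fin m) (Fin n) ℝ) (x y : EuclideanSpace ℝ (Fin n)) :
    mulVecE A (x - y) = mulVecE A x - mulVecE A y := by
  ext i
  simp only [mulVecE_apply, PiLp.sub_apply, mul_sub, Finset.sum_sub_distrib]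

lemma inner_eq_sum {n : ℕ} (x y : EuclideanSpace ℝ (Fin n)) : ⟪x, y⟫ = ∑ i, x i * y i := by
  simp [PiLp.inner_apply, mul_comm]

/-- The cone generated by finitely many vectors is closed. -/
theorem isClosed_finGenCone {n : ℕ} :
    ∀ (N : ℕ) (g : Fin N → EuclideanSpace ℝ (Fin n)),
      IsClosed {x : EuclideanSpace ℝ (Fin n) |
        ∃ l : Fin N → ℝ, (∀ i, 0 ≤ l i) ∧ x = ∑ i, l i • g i} := by
  intro N
  induction N with
  | zero =>
    intro g
    convert isClosed_singleton (x := (0 : EuclideanSpace ℝ (Fin n)))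
    ext x
    simp only [Set.mem_setOf_eq, Set.mem_singleton_iff]
    constructor
    · rintro ⟨l, -, rfl⟩; simp
    · rintro rfl; exact ⟨fun i => 0, fun i => le_refl _, by simp⟩
  | succ N ih =>
    intro g
    by_cases hg : LinearIndependent ℝ g
    · set φ : (Fin (N + 1) → ℝ) →ₗ[ℝ] EuclideanSpace ℝ (Fin n) :=
        (Fintype.linearCombination ℝ) g with hφ
      have hker : LinearMap.ker φ = ⊥ := by
        rw [LinearMap.ker_eq_bot']
        intro l hl
        have := Fintype.linearIndependent_iff.mp hg l ?_
        · funext i; exact this i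
        · simpa [hφ, Fintype.linearCombination_apply] using hl
      have hemb := LinearMap.isClosedEmbedding_of_injective hker
      have horth : IsClosed {l : Fin (N + 1) → ℝ | ∀ i, 0 ≤ l i} := by
        have : {l : Fin (N + 1) → ℝ | ∀ i, 0 ≤ l i} = ⋂ i, {l | 0 ≤ l i} := by
          ext l; simp
        rw [this]
        exact isClosed_iInter fun i =>
          isClosed_le continuous_const (continuous_apply i)
      have himg : IsClosed (φ '' {l : Fin (N + 1) → ℝ | ∀ i, 0 ≤ l i}) :=
        hemb.isClosedMap _ horth
      convert himg using 1
      ext x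
      simp only [Set.mem_setOf_eq, Set.mem_image]
      constructor
      · rintro ⟨l, hl, rfl⟩
        exact ⟨l, hl, by simp [hφ, Fintype.linearCombination_apply]⟩
      · rintro ⟨l, hl, rfl⟩
        exact ⟨l, hl, by simp [hφ, Fintype.linearCombination_apply]⟩
    · obtain ⟨μ, hμsum, i₀, hμi₀⟩ : ∃ μ : Fin (N + 1) → ℝ,
          (∑ i, μ i • g i) = 0 ∧ ∃ i, μ i ≠ 0 := by
        rw [Fintype.not_linearIndependent_iff] at hg
        obtain ⟨μ, h1, h2⟩ := hg
        exact ⟨μ, h1, h2⟩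
      obtain ⟨ν, hνsum, j₀, hνj₀⟩ : ∃ ν : Fin (N + 1) → ℝ,
          (∑ i, ν i • g i) = 0 ∧ ∃ j, 0 < ν j := by
        rcases lt_or_gt_of_ne hμi₀ with h | h
        · exact ⟨-μ, by simp [hμsum], i₀, by simpa using h⟩
        · exact ⟨μ, hμsum, i₀, h⟩
      have key : {x : EuclideanSpace ℝ (Fin n) |
            ∃ l : Fin (N + 1) → ℝ, (∀ i, 0 ≤ l i) ∧ x = ∑ i, l i • g i} =
          ⋃ j : Fin (N + 1), {x | ∃ l : Fin N → ℝ, (∀ i, 0 ≤ l i) ∧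
            x = ∑ i, l i • g (j.succAbove i)} := by
        ext x
        simp only [Set.mem_setOf_eq, Set.mem_iUnion]
        constructor
        · rintro ⟨l, hl, hx⟩
          classical
          set T : Finset (Fin (N + 1)) := Finset.univ.filter (fun i => 0 < ν i) with hT
          have hTne : T.Nonempty := ⟨j₀, by simp [hT, hνj₀]⟩
          set t : ℝ := T.inf' hTne (fun i => l i / ν i) with ht
          have ht0 : 0 ≤ t := by
            apply Finset.le_inf'
            intro i hi
            rw [hT, Finset.mem_filter] at hi
            exact div_nonneg (hl i) hi.2.le
          obtain ⟨j, hjT, hjeq⟩ := Finset.exists_mem_eq_inf' hTne (fun i => l i / ν i)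
          rw [hT, Finset.mem_filter] at hjT
          have hνj : 0 < ν j := hjT.2
          have htj : t = l j / ν j := by rw [ht, hjeq]
          have hl'0 : ∀ i, 0 ≤ l i - t * ν i := by
            intro i
            by_cases hi : 0 < ν i
            · have h1 : t ≤ l i / ν i := Finset.inf'_le _ (by simp [hT, hi])
              have h2 := (le_div_iff₀ hi).mp h1
              linarith
            · push_neg at hi
              nlinarith [hl i, mul_nonneg ht0 (neg_nonneg.mpr hi)]
          have hl'j : l j - t * ν j = 0 := by
            rw [htj, div_mul_cancel₀ _ (ne_of_gt hνj), sub_self]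
          have hsum' : x = ∑ i, (l i - t * ν i) • g i := by
            simp only [sub_smul, Finset.sum_sub_distrib, mul_smul]
            rw [← Finset.smul_sum, hνsum, smul_zero, sub_zero, hx]
          refine ⟨j, fun i => l (j.succAbove i) - t * ν (j.succAbove i),
            fun i => hl'0 _, ?_⟩
          rw [hsum', Fin.sum_univ_succAbove (fun i => (l i - t * ν i) • g i) j, hl'j,
            zero_smul, zero_add]
        · rintro ⟨j, l, hl, rfl⟩
          have l' : Fin (N + 1) → ℝ := j.insertNth 0 l
          refine ⟨(j.insertNth 0 l : Fin (N + 1) → ℝ), ?_, ?_⟩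
          · intro i
            rcases eq_or_ne i j with rfl | hij
            · simp
            · obtain ⟨k, hk⟩ := Fin.exists_succAbove_eq hij
              rw [← hk]
              simpa using hl k
          · have hs := Fin.sum_univ_succAbove
              (fun i => ((j.insertNth 0 l : Fin (N + 1) → ℝ)) i • g i) j
            rw [hs]
            simp
      rw [key]
      exact isClosed_iUnion_of_finite fun j => ih _

theorem isClosed_finGenCone' {n : ℕ} {ι : Type*} [Fintype ι]
    (g : ι → EuclideanSpace ℝ (Fin n)) :
    IsClosed {x : EuclideanSpace ℝ (Fin n) |
      ∃ l : ι → ℝ, (∀ i, 0 ≤ l i) ∧ x = ∑ i, l i • g i} := by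
  classical
  obtain ⟨e⟩ : Nonempty (ι ≃ Fin (Fintype.card ι)) := ⟨Fintype.equivFin ι⟩
  convert isClosed_finGenCone (Fintype.card ι) (g ∘ e.symm) using 1
  ext x
  simp only [Set.mem_setOf_eq]
  constructor
  · rintro ⟨l, hl, rfl⟩
    refine ⟨l ∘ e.symm, fun i => hl _, ?_⟩
    rw [← e.symm.sum_comp (fun i => l i • g i)]
    rfl
  · rintro ⟨l, hl, rfl⟩
    refine ⟨l ∘ e, fun i => hl _, ?_⟩
    rw [← e.symm.sum_comp (fun i => (l ∘ e) i • g i)]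
    simp

/-- The polyhedral part `{AEᵀ y + AIᵀ z}` with `z ≥ 0` supported on active constraints
is a finitely generated cone, hence closed. -/
lemma isClosed_Rset {n mE mI : ℕ} (AE : Matrix (Fin mE) (Fin n) ℝ)
    (AI : Matrix (Fin mI) (Fin n) ℝ) (act : Fin mI → Prop) :
    IsClosed {r : EuclideanSpace ℝ (Fin n) |
      ∃ (y : EuclideanSpace ℝ (Fin mE)) (z : EuclideanSpace ℝ (Fin mI)),
        (∀ i, 0 ≤ z i) ∧ (∀ i, ¬ act i → z i = 0) ∧
        r = mulVecE AEᵀ y + mulVecE AIᵀ z} := by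
  classical
  set rowE : Fin mE → EuclideanSpace ℝ (Fin n) := fun j => WithLp.toLp 2 (fun i => AE j i) with hrowE
  set rowI : Fin mI → EuclideanSpace ℝ (Fin n) := fun j => WithLp.toLp 2 (fun i => AI j i) with hrowI
  have hAE : ∀ y : EuclideanSpace ℝ (Fin mE), mulVecE AEᵀ y = ∑ j, y j • rowE j := by
    intro y
    ext i
    rw [WithLp.ofLp_sum, Finset.sum_apply]
    simp only [mulVecE_apply, Matrix.transpose_apply, hrowE, PiLp.smul_apply, smul_eq_mul,
      PiLp.toLp_apply]
    exact Finset.sum_congr rfl fun j _ => mul_comm _ _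
  have hAI : ∀ z : EuclideanSpace ℝ (Fin mI), mulVecE AIᵀ z = ∑ j, z j • rowI j := by
    intro z
    ext i
    rw [WithLp.ofLp_sum, Finset.sum_apply]
    simp only [mulVecE_apply, Matrix.transpose_apply, hrowI, PiLp.smul_apply, smul_eq_mul,
      PiLp.toLp_apply]
    exact Finset.sum_congr rfl fun j _ => mul_comm _ _
  set ι := (Fin mE ⊕ Fin mE) ⊕ {i : Fin mI // act i} with hι
  set g : ι → EuclideanSpace ℝ (Fin n) := fun k =>
    Sum.elim (Sum.elim (fun j => rowE j) (fun j => -rowE j)) (fun j => rowI j.1) k with hg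
  convert isClosed_finGenCone' g using 1
  ext r
  simp only [Set.mem_setOf_eq]
  constructor
  · rintro ⟨y, z, hz0, hzsupp, rfl⟩
    refine ⟨Sum.elim (Sum.elim (fun j => max (y j) 0) (fun j => max (-(y j)) 0))
      (fun j => z j.1), ?_, ?_⟩
    · rintro ((j | j) | j)
      · exact le_max_right _ _
      · exact le_max_right _ _
      · exact hz0 _
    · rw [Fintype.sum_sum_type, Fintype.sum_sum_type]
      simp only [Sum.elim_inl, Sum.elim_inr, hg]
      have h1 : mulVecE AEᵀ y =
          (∑ j, max (y j) 0 • rowE j) + ∑ j, max (-(y j)) 0 • (-rowE j) := by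
        rw [hAE, ← Finset.sum_add_distrib]
        refine Finset.sum_congr rfl fun j _ => ?_
        have : y j = max (y j) 0 - max (-(y j)) 0 := by
          rcases le_total (y j) 0 with h | h
          · rw [max_eq_right h, max_eq_left (by linarith)]; ring
          · rw [max_eq_left h, max_eq_right (by linarith)]; ring
        rw [smul_neg, ← sub_eq_add_neg, ← sub_smul, ← this]
      have h2 : mulVecE AIᵀ z = ∑ j : {i : Fin mI // act i}, z j.1 • rowI j.1 := by
        rw [hAI]
        rw [← Finset.sum_subtype (Finset.univ.filter act) (fun x => by simp)
          (fun j => z j • rowI j)]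
        refine (Finset.sum_subset (Finset.filter_subset _ _) ?_).symm
        intro i _ hi
        rw [Finset.mem_filter] at hi
        push_neg at hi
        rw [hzsupp i (hi (Finset.mem_univ i)), zero_smul]
      rw [h1, h2]
  · rintro ⟨l, hl, rfl⟩
    refine ⟨(WithLp.toLp 2 (fun j => l (Sum.inl (Sum.inl j)) - l (Sum.inl (Sum.inr j))) :
        EuclideanSpace ℝ (Fin mE)),
      (WithLp.toLp 2 (fun i => if h : act i then l (Sum.inr ⟨i, h⟩) else 0) : EuclideanSpace ℝ (Fin mI)),
      ?_, ?_, ?_⟩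
    · intro i
      by_cases h : act i
      · simp only [dif_pos h]; exact hl _
      · simp only [dif_neg h]; exact le_refl _
    · intro i hi
      simp only [dif_neg hi]
    · rw [Fintype.sum_sum_type, Fintype.sum_sum_type]
      simp only [Sum.elim_inl, Sum.elim_inr, hg]
      have h1 : mulVecE AEᵀ (WithLp.toLp 2 (fun j => l (Sum.inl (Sum.inl j)) - l (Sum.inl (Sum.inr j))) :
          EuclideanSpace ℝ (Fin mE)) =
          (∑ j, l (Sum.inl (Sum.inl j)) • rowE j) + ∑ j, l (Sum.inl (Sum.inr j)) • (-rowE j) := by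
        rw [hAE, ← Finset.sum_add_distrib]
        refine Finset.sum_congr rfl fun j _ => ?_
        rw [smul_neg, ← sub_eq_add_neg, ← sub_smul]
      have h2 : mulVecE AIᵀ (WithLp.toLp 2 (fun i => if h : act i then l (Sum.inr ⟨i, h⟩) else 0) :
          EuclideanSpace ℝ (Fin mI)) = ∑ j : {i : Fin mI // act i}, l (Sum.inr j) • rowI j.1 := by
        rw [hAI]
        calc ∑ j : Fin mI, (if h : act j then l (Sum.inr ⟨j, h⟩) else 0) • rowI j
            = ∑ j ∈ Finset.univ.filter act,
              (if h : act j then l (Sum.inr ⟨j, h⟩) else 0) • rowI j := by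
              refine (Finset.sum_subset (Finset.filter_subset _ _) ?_).symm
              intro i _ hi
              rw [Finset.mem_filter] at hi
              push_neg at hi
              rw [dif_neg (hi (Finset.mem_univ i)), zero_smul]
          _ = ∑ j : {i : Fin mI // act i},
              (if h : act j.1 then l (Sum.inr ⟨j.1, h⟩) else 0) • rowI j.1 :=
              Finset.sum_subtype (Finset.univ.filter act) (fun x => by simp)
                (fun j => (if h : act j then l (Sum.inr ⟨j, h⟩) else 0) • rowI j)
          _ = ∑ j : {i : Fin mI // act i}, l (Sum.inr j) • rowI j.1 :=
              Finset.sum_congr rfl fun j _ => by rw [dif_pos j.2]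
      rw [h1, h2]

lemma isClosed_Nset {n : ℕ} (K : Set (EuclideanSpace ℝ (Fin n)))
    (xstar : EuclideanSpace ℝ (Fin n)) :
    IsClosed {u : EuclideanSpace ℝ (Fin n) |
      (∀ x ∈ K, ⟪u, x⟫ ≤ 0) ∧ ⟪u, xstar⟫ = 0} := by
  have h1 : IsClosed {u : EuclideanSpace ℝ (Fin n) | ∀ x ∈ K, ⟪u, x⟫ ≤ 0} := by
    have : {u : EuclideanSpace ℝ (Fin n) | ∀ x ∈ K, ⟪u, x⟫ ≤ 0} =
        ⋂ x ∈ K, {u | ⟪u, x⟫ ≤ 0} := by ext u; simp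
    rw [this]
    refine isClosed_biInter fun x _ => isClosed_le ?_ continuous_const
    exact Continuous.inner continuous_id continuous_const
  have h2 : IsClosed {u : EuclideanSpace ℝ (Fin n) | ⟪u, xstar⟫ = 0} :=
    isClosed_eq (Continuous.inner continuous_id continuous_const) continuous_const
  exact h1.inter h2

lemma isClosed_Mset {n mE mI : ℕ} (K : Set (EuclideanSpace ℝ (Fin n)))
    (AE : Matrix (Fin mE) (Fin n) ℝ) (bE : EuclideanSpace ℝ (Fin mE))
    (AI : Matrix (Fin mI) (Fin n) ℝ) (bI : EuclideanSpace ℝ (Fin mI))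
    (xstar xb : EuclideanSpace ℝ (Fin n))
    (hxb : xb ∈ interior K)
    (hAExb : mulVecE AE xb = bE) (hAIxb : ∀ i, mulVecE AI xb i ≤ bI i)
    (hAEx : mulVecE AE xstar = bE) (hAIx : ∀ i, mulVecE AI xstar i ≤ bI i) :
    IsClosed {m : EuclideanSpace ℝ (Fin n) |
      ∃ (y : EuclideanSpace ℝ (Fin mE)) (z : EuclideanSpace ℝ (Fin mI))
        (u : EuclideanSpace ℝ (Fin n)),
        (∀ i, 0 ≤ z i) ∧ (∀ i, mulVecE AI xstar i ≠ bI i → z i = 0) ∧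
        (∀ x ∈ K, ⟪u, x⟫ ≤ 0) ∧ ⟪u, xstar⟫ = 0 ∧
        m = mulVecE AEᵀ y + mulVecE AIᵀ z + u} := by
  classical
  obtain ⟨δ, hδ0, hball⟩ := Metric.isOpen_iff.mp isOpen_interior xb hxb
  have hballK : Metric.ball xb δ ⊆ K := hball.trans interior_subset
  -- coercivity of the normal-cone part
  have hcoer : ∀ u : EuclideanSpace ℝ (Fin n), (∀ x ∈ K, ⟪u, x⟫ ≤ 0) → ⟪u, xstar⟫ = 0 →
      (δ / 2) * ‖u‖ ≤ -⟪u, xb - xstar⟫ := by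
    intro u hu hux
    rcases eq_or_ne u 0 with rfl | hu0
    · simp
    · have hnu : (0:ℝ) < ‖u‖ := norm_pos_iff.mpr hu0
      have hmem : xb + (δ / (2 * ‖u‖)) • u ∈ K := by
        apply hballK
        rw [Metric.mem_ball, dist_eq_norm, add_sub_cancel_left, norm_smul]
        rw [Real.norm_eq_abs, abs_of_pos (by positivity)]
        have heq : δ / (2 * ‖u‖) * ‖u‖ = δ / 2 := by field_simp
        rw [heq]
        linarith
      have h1 := hu _ hmem
      rw [inner_add_right, real_inner_smul_right, real_inner_self_eq_norm_mul_norm] at h1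
      have : ⟪u, xb⟫ ≤ -((δ/2) * ‖u‖) := by
        have hq : δ / (2 * ‖u‖) * (‖u‖ * ‖u‖) = (δ/2) * ‖u‖ := by
          field_simp
        linarith [h1, hq ▸ h1]
      rw [inner_sub_right, hux, sub_zero]
      linarith
  have hrbd : ∀ (y : EuclideanSpace ℝ (Fin mE)) (z : EuclideanSpace ℝ (Fin mI)),
      (∀ i, 0 ≤ z i) → (∀ i, mulVecE AI xstar i ≠ bI i → z i = 0) →
      ⟪mulVecE AEᵀ y + mulVecE AIᵀ z, xb - xstar⟫ ≤ 0 := by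
    intro y z hz0 hzsupp
    rw [inner_add_left, inner_mulVecE_transpose, inner_mulVecE_transpose, mulVecE_sub,
      mulVecE_sub, hAExb, hAEx, sub_self, inner_zero_right, zero_add, inner_eq_sum]
    apply Finset.sum_nonpos
    intro i _
    rcases eq_or_ne (mulVecE AI xstar i) (bI i) with h | h
    · have : (mulVecE AI xb - mulVecE AI xstar) i = mulVecE AI xb i - bI i := by
        rw [PiLp.sub_apply, h]
      rw [this]
      exact mul_nonpos_of_nonneg_of_nonpos (hz0 i) (by linarith [hAIxb i])
    · rw [hzsupp i h, zero_mul]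
  -- sequential closedness
  apply IsSeqClosed.isClosed
  intro ms m hmem hlim
  choose yk zk uk h1 h2 h3 h4 h5 using hmem
  have haconv : Filter.Tendsto (fun k => ⟪ms k, xb - xstar⟫) Filter.atTop
      (nhds ⟪m, xb - xstar⟫) := by
    exact ((Continuous.inner continuous_id continuous_const).tendsto m).comp hlim
  obtain ⟨b, hb⟩ : BddBelow (Set.range fun k => ⟪ms k, xb - xstar⟫) :=
    haconv.bddBelow_range
  have hubd : ∀ k, ‖uk k‖ ≤ (2 / δ) * (-b) := by
    intro k
    have hbk : b ≤ ⟪ms k, xb - xstar⟫ := hb ⟨k, rfl⟩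
    have hsplit : ⟪ms k, xb - xstar⟫ =
        ⟪mulVecE AEᵀ (yk k) + mulVecE AIᵀ (zk k), xb - xstar⟫ + ⟪uk k, xb - xstar⟫ := by
      rw [h5 k, inner_add_left]
    have hc := hcoer (uk k) (h3 k) (h4 k)
    have hr := hrbd (yk k) (zk k) (h1 k) (h2 k)
    have hkey : (δ / 2) * ‖uk k‖ ≤ -b := by nlinarith
    have h2b : δ * ‖uk k‖ ≤ 2 * (-b) := by linarith
    have heq : (2 / δ) * (-b) = (2 * (-b)) / δ := by ring
    rw [heq, le_div_iff₀ hδ0]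
    linarith [mul_comm δ ‖uk k‖]
  -- extract a convergent subsequence of the `u` parts
  have hNcl := isClosed_Nset K xstar
  have hScompact : IsCompact ({u : EuclideanSpace ℝ (Fin n) |
      (∀ x ∈ K, ⟪u, x⟫ ≤ 0) ∧ ⟪u, xstar⟫ = 0} ∩ Metric.closedBall 0 ((2 / δ) * (-b))) :=
    (isCompact_closedBall (0 : EuclideanSpace ℝ (Fin n)) _).inter_left hNcl
  have hmemS : ∀ k, uk k ∈ {u : EuclideanSpace ℝ (Fin n) |
      (∀ x ∈ K, ⟪u, x⟫ ≤ 0) ∧ ⟪u, xstar⟫ = 0} ∩ Metric.closedBall 0 ((2 / δ) * (-b)) := by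
    intro k
    refine ⟨⟨h3 k, h4 k⟩, ?_⟩
    rw [Metric.mem_closedBall, dist_zero_right]
    exact hubd k
  obtain ⟨u, huS, φ, hφ, hφlim⟩ := hScompact.tendsto_subseq hmemS
  -- the residuals converge to `m - u`, which lies in the closed polyhedral part
  have hrlim : Filter.Tendsto (fun j => ms (φ j) - uk (φ j)) Filter.atTop (nhds (m - u)) :=
    (hlim.comp (hφ.tendsto_atTop)).sub hφlim
  have hRcl := isClosed_Rset AE AI (fun i => mulVecE AI xstar i = bI i)
  have hmemR : ∀ j, ms (φ j) - uk (φ j) ∈ {r : EuclideanSpace ℝ (Fin n) |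
      ∃ (y : EuclideanSpace ℝ (Fin mE)) (z : EuclideanSpace ℝ (Fin mI)),
        (∀ i, 0 ≤ z i) ∧ (∀ i, ¬ (mulVecE AI xstar i = bI i) → z i = 0) ∧
        r = mulVecE AEᵀ y + mulVecE AIᵀ z} := by
    intro j
    exact ⟨yk (φ j), zk (φ j), h1 _, h2 _, by rw [h5 (φ j)]; abel⟩
  have hmR : m - u ∈ {r : EuclideanSpace ℝ (Fin n) |
      ∃ (y : EuclideanSpace ℝ (Fin mE)) (z : EuclideanSpace ℝ (Fin mI)),
        (∀ i, 0 ≤ z i) ∧ (∀ i, ¬ (mulVecE AI xstar i = bI i) → z i = 0) ∧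
        r = mulVecE AEᵀ y + mulVecE AIᵀ z} :=
    hRcl.mem_of_tendsto hrlim (Filter.Eventually.of_forall hmemR)
  obtain ⟨y', z', hz'0, hz'supp, heq'⟩ := hmR
  exact ⟨y', z', u, hz'0, hz'supp, huS.1.1, huS.1.2, by
    have : m = (m - u) + u := by abel
    rw [this, heq']⟩

theorem old_sep {E : Type*} [NormedAddCommGroup E] [InnerProductSpace ℝ E] [CompleteSpace E]
    (K : ConvexCone ℝ E) (ne : (K : Set E).Nonempty) (hc : IsClosed (K : Set E)) {b : E}
    (hb : b ∉ K) : ∃ y : E, (∀ x ∈ K, 0 ≤ ⟪x, y⟫) ∧ ⟪y, b⟫ < 0 := by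
  obtain ⟨f, u, hfu, hub⟩ := geometric_hahn_banach_closed_point K.convex hc hb
  obtain ⟨a, ha⟩ := ne
  have h0 : (0 : E) ∈ (K : Set E) := by
    have ht : Filter.Tendsto (fun k : ℕ => (1 / ((k : ℝ) + 1)) • a) Filter.atTop (nhds 0) := by
      have h1 : Filter.Tendsto (fun k : ℕ => 1 / ((k : ℝ) + 1)) Filter.atTop (nhds 0) :=
        tendsto_one_div_add_atTop_nhds_zero_nat
      simpa using h1.smul_const a
    exact hc.mem_of_tendsto ht (Filter.Eventually.of_forall fun k =>
      K.smul_mem (by positivity) ha)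
  have hu0 : 0 < u := by simpa using hfu 0 h0
  have hfx : ∀ x ∈ K, f x ≤ 0 := by
    intro x hx
    by_contra hpos
    push_neg at hpos
    have ht : 0 < u / f x + 1 := by positivity
    have := hfu _ (K.smul_mem ht hx)
    rw [map_smul, smul_eq_mul, add_mul, div_mul_cancel₀ _ hpos.ne'] at this
    linarith
  refine ⟨-(InnerProductSpace.toDual ℝ E).symm f, ?_, ?_⟩
  · intro x hx
    rw [inner_neg_right, real_inner_comm, InnerProductSpace.toDual_symm_apply]
    linarith [hfx x hx]
  · rw [inner_neg_left, InnerProductSpace.toDual_symm_apply]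
    linarith

theorem old_dual_dual {E : Type*} [NormedAddCommGroup E] [InnerProductSpace ℝ E]
    [CompleteSpace E] (K : ConvexCone ℝ E) (ne : (K : Set E).Nonempty)
    (hc : IsClosed (K : Set E)) {v : E}
    (h : ∀ s : E, (∀ x ∈ (K : Set E), 0 ≤ ⟪x, s⟫) → 0 ≤ ⟪s, v⟫) : v ∈ (K : Set E) := by
  by_contra hv
  obtain ⟨y, hy, hyv⟩ := old_sep K ne hc hv
  linarith [h y hy]

set_option maxHeartbeats 1000000 in
theorem key_ineq {n mE mI : ℕ} (K : Set (EuclideanSpace ℝ (Fin n)))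
    (hKcl : IsClosed K) (hKconv : Convex ℝ K)
    (hKcone : ∀ x ∈ K, ∀ t : ℝ, 0 ≤ t → t • x ∈ K)
    (AE : Matrix (Fin mE) (Fin n) ℝ) (bE : EuclideanSpace ℝ (Fin mE))
    (AI : Matrix (Fin mI) (Fin n) ℝ) (bI : EuclideanSpace ℝ (Fin mI))
    (xstar : EuclideanSpace ℝ (Fin n)) (hxK : xstar ∈ K)
    (hAEx : mulVecE AE xstar = bE) (hAIx : ∀ i, mulVecE AI xstar i ≤ bI i)
    (xb : EuclideanSpace ℝ (Fin n)) (hxb : xb ∈ interior K)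
    (hAExb : mulVecE AE xb = bE) (hAIxb : ∀ i, mulVecE AI xb i ≤ bI i)
    (d : EuclideanSpace ℝ (Fin n))
    (hVI : ∀ x, mulVecE AE x = bE → (∀ i, mulVecE AI x i ≤ bI i) → x ∈ K →
      ⟪d, x - xstar⟫ ≤ 0)
    (v : EuclideanSpace ℝ (Fin n))
    (hvE : mulVecE AE v = 0)
    (hvI : ∀ i, mulVecE AI xstar i = bI i → mulVecE AI v i ≤ 0)
    (hvK : ∀ u : EuclideanSpace ℝ (Fin n),
      (∀ x ∈ K, ⟪u, x⟫ ≤ 0) → ⟪u, xstar⟫ = 0 → ⟪u, v⟫ ≤ 0) :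
    ⟪d, v⟫ ≤ 0 := by
  classical
  have hK0 : (0 : EuclideanSpace ℝ (Fin n)) ∈ K := by
    simpa using hKcone xstar hxK 0 le_rfl
  have hKadd : ∀ a ∈ K, ∀ b ∈ K, a + b ∈ K := by
    intro a ha b hb
    have h2 : ((1:ℝ)/2) • a + ((1:ℝ)/2) • b ∈ K :=
      hKconv ha hb (by norm_num) (by norm_num) (by norm_num)
    have := hKcone _ h2 2 (by norm_num)
    rwa [smul_add, smul_smul, smul_smul, (by norm_num : (2:ℝ) * (1/2) = 1), one_smul,
      one_smul] at this
  set W' : ConvexCone ℝ (EuclideanSpace ℝ (Fin n)) :=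
    { carrier := {w | ∃ k ∈ K, ∃ t : ℝ, w = k + t • xstar}
      smul_mem' := by
        rintro c hc w ⟨k, hk, t, rfl⟩
        exact ⟨c • k, hKcone k hk c hc.le, c * t, by rw [smul_add, smul_smul]⟩
      add_mem' := by
        rintro w₁ ⟨k₁, hk₁, t₁, rfl⟩ w₂ ⟨k₂, hk₂, t₂, rfl⟩
        exact ⟨k₁ + k₂, hKadd _ hk₁ _ hk₂, t₁ + t₂, by rw [add_smul]; abel⟩ } with hW'
  set W : ConvexCone ℝ (EuclideanSpace ℝ (Fin n)) := W'.closure with hW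
  have hWcl : IsClosed (W : Set (EuclideanSpace ℝ (Fin n))) := isClosed_closure
  have hWne : (W : Set (EuclideanSpace ℝ (Fin n))).Nonempty :=
    ⟨0, subset_closure ⟨0, hK0, 0, by simp⟩⟩
  have hsubW : (W' : Set (EuclideanSpace ℝ (Fin n))) ⊆ (W : Set _) := subset_closure
  have hvW : v ∈ (W : Set (EuclideanSpace ℝ (Fin n))) := by
    refine old_dual_dual W hWne hWcl ?_
    intro s hs
    have hsW : ∀ x ∈ (W : Set (EuclideanSpace ℝ (Fin n))), 0 ≤ ⟪x, s⟫ := fun x hx => hs x hx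
    have hsx : ∀ x ∈ K, ⟪-s, x⟫ ≤ 0 := by
      intro x hx
      have := hsW x (hsubW ⟨x, hx, 0, by simp⟩)
      rw [inner_neg_left]
      rw [real_inner_comm] at this
      linarith
    have hsxstar : ⟪-s, xstar⟫ = 0 := by
      have h1 := hsW xstar (hsubW ⟨0, hK0, 1, by simp⟩)
      have h2 := hsW (-xstar) (hsubW ⟨0, hK0, -1, by simp⟩)
      rw [inner_neg_left] at h2
      rw [inner_neg_left, real_inner_comm]
      linarith
    have := hvK (-s) hsx hsxstar
    rw [inner_neg_left] at this
    linarith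
  have hmain : ∀ ε : ℝ, 0 < ε → ε < 1 →
      (1 - ε) * ⟪d, v⟫ + ε * ⟪d, xb - xstar⟫ ≤ 0 := by
    intro ε hε0 hε1
    set w : EuclideanSpace ℝ (Fin n) := (1 - ε) • v + ε • (xb - xstar) with hwdef
    have hb' : xstar + ε • (xb - xstar) ∈ interior K := by
      have := hKconv.combo_interior_self_mem_interior (x := xb) (y := xstar)
        hxb hxK hε0 (by linarith : (0:ℝ) ≤ 1 - ε) (by ring)
      convert this using 1
      module
    obtain ⟨δ, hδ0, hball⟩ := Metric.isOpen_iff.mp isOpen_interior _ hb'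
    have hvcl : v ∈ closure (W' : Set (EuclideanSpace ℝ (Fin n))) := hvW
    rw [Metric.mem_closure_iff] at hvcl
    obtain ⟨w₀, hw₀, hdist⟩ := hvcl (δ / 2) (by positivity)
    obtain ⟨k₀, hk₀, t₀, hw₀eq⟩ := hw₀
    set k₁ : EuclideanSpace ℝ (Fin n) := (1 - ε) • k₀ with hk₁def
    have hk₁ : k₁ ∈ K := hKcone _ hk₀ _ (by linarith)
    set t₁ : ℝ := (1 - ε) * t₀ with ht₁def
    set s : ℝ := |t₁| + 1 with hsdef
    have hs0 : 0 < s := by positivity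
    have hsne : s ≠ 0 := ne_of_gt hs0
    set x'' : EuclideanSpace ℝ (Fin n) := (1 + t₁ / s) • xstar + (1 / s) • k₁ with hx''def
    have hx''K : x'' ∈ K := by
      apply hKadd
      · apply hKcone _ hxK
        have h1 : |t₁| ≤ s := by rw [hsdef]; linarith
        have h2 : -1 ≤ t₁ / s := by
          rw [neg_le, ← neg_div, div_le_one hs0]
          calc -t₁ ≤ |t₁| := neg_le_abs t₁
          _ ≤ s := h1
        linarith
      · exact hKcone _ hk₁ _ (by positivity)
    have hw₀s : (1 - ε) • w₀ = s • (x'' - xstar) := by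
      rw [hx''def, hw₀eq, hk₁def, ht₁def]
      match_scalars <;> (field_simp; try ring)
    set k₂ : EuclideanSpace ℝ (Fin n) := (xstar + ε • (xb - xstar)) + (1 - ε) • (v - w₀)
      with hk₂def
    have hk₂K : k₂ ∈ K := by
      apply interior_subset
      apply hball
      rw [Metric.mem_ball, hk₂def, dist_eq_norm]
      rw [show (xstar + ε • (xb - xstar)) + (1 - ε) • (v - w₀) - (xstar + ε • (xb - xstar))
        = (1 - ε) • (v - w₀) by abel]
      rw [norm_smul, Real.norm_eq_abs, abs_of_pos (by linarith)]
      have hnv : ‖v - w₀‖ < δ / 2 := by rwa [← dist_eq_norm]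
      nlinarith [norm_nonneg (v - w₀)]
    have hwdec : w = s • (x'' - xstar) + (k₂ - xstar) := by
      rw [← hw₀s, hwdef, hk₂def]
      module
    have hs1ne : s + 1 ≠ 0 := by positivity
    have hstep : xstar + (1 / (s + 1)) • w ∈ K := by
      have heq : xstar + (1 / (s + 1)) • w =
          (s / (s + 1)) • x'' + (1 / (s + 1)) • k₂ := by
        rw [hwdec]
        match_scalars <;> (field_simp; try ring)
      rw [heq]
      exact hKconv hx''K hk₂K (by positivity) (by positivity) (by field_simp)
    set t₁' : ℝ := 1 / (s + 1) with ht₁'def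
    have ht₁'0 : 0 < t₁' := by positivity
    have hKt : ∀ t : ℝ, 0 < t → t ≤ t₁' → xstar + t • w ∈ K := by
      intro t ht0 htle
      have heq : xstar + t • w = (1 - t / t₁') • xstar + (t / t₁') • (xstar + t₁' • w) := by
        match_scalars <;> (field_simp; try ring)
      rw [heq]
      apply hKconv hxK hstep
      · have : t / t₁' ≤ 1 := by rw [div_le_one ht₁'0]; exact htle
        linarith
      · positivity
      · ring
    -- linear data of w
    have hAEw : mulVecE AE w = 0 := by
      rw [hwdef, mulVecE_add, mulVecE_smul, mulVecE_smul, mulVecE_sub, hAExb, hAEx, hvE]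
      simp
    have hwexp : ∀ (t : ℝ) i, mulVecE AI (xstar + t • w) i =
        mulVecE AI xstar i + t * mulVecE AI w i := by
      intro t i
      rw [mulVecE_add, mulVecE_smul, PiLp.add_apply, PiLp.smul_apply, smul_eq_mul]
    have hAIw_active : ∀ i, mulVecE AI xstar i = bI i → mulVecE AI w i ≤ 0 := by
      intro i hi
      have hexp : mulVecE AI w i =
          (1 - ε) * mulVecE AI v i + ε * (mulVecE AI xb i - mulVecE AI xstar i) := by
        rw [hwdef, mulVecE_add, mulVecE_smul, mulVecE_smul, mulVecE_sub, PiLp.add_apply,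
          PiLp.smul_apply, PiLp.smul_apply, PiLp.sub_apply, smul_eq_mul, smul_eq_mul]
      rw [hexp, hi]
      have h1 := hvI i hi
      have h2 := hAIxb i
      nlinarith
    -- eventual feasibility
    have hevI : ∀ i, ∀ᶠ t in nhdsWithin (0:ℝ) (Set.Ioi 0),
        mulVecE AI (xstar + t • w) i ≤ bI i := by
      intro i
      rcases eq_or_lt_of_le (hAIx i) with heq | hlt
      · filter_upwards [self_mem_nhdsWithin] with t ht
        rw [hwexp t i, ← heq]
        have h1 := hAIw_active i heq
        have h2 : (0:ℝ) < t := ht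
        nlinarith
      · have hcontf : Continuous (fun t : ℝ => mulVecE AI xstar i + t * mulVecE AI w i) := by
          fun_prop
        have hcont : Filter.Tendsto (fun t : ℝ => mulVecE AI xstar i + t * mulVecE AI w i)
            (nhds 0) (nhds (mulVecE AI xstar i)) := by
          simpa using hcontf.tendsto (0:ℝ)
        have hev := hcont.eventually_lt_const hlt
        apply Filter.Eventually.filter_mono nhdsWithin_le_nhds
        filter_upwards [hev] with t ht
        rw [hwexp t i]
        exact le_of_lt ht
    have hev : ∀ᶠ t in nhdsWithin (0:ℝ) (Set.Ioi 0),
        (0 < t ∧ t ≤ t₁') ∧ ∀ i, mulVecE AI (xstar + t • w) i ≤ bI i := by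
      have h1 : ∀ᶠ t in nhdsWithin (0:ℝ) (Set.Ioi 0), t ∈ Set.Ioc 0 t₁' :=
        Ioc_mem_nhdsGT_of_mem ⟨le_refl 0, ht₁'0⟩
      have h2 := Filter.eventually_all.mpr hevI
      filter_upwards [h1, h2] with t ht hI
      exact ⟨⟨ht.1, ht.2⟩, hI⟩
    obtain ⟨t, ⟨⟨ht0, htle⟩, htI⟩⟩ := hev.exists
    have hxt := hVI (xstar + t • w) ?_ htI (hKt t ht0 htle)
    · rw [show xstar + t • w - xstar = t • w by abel, real_inner_smul_right] at hxt
      have hw0 : ⟪d, w⟫ ≤ 0 := by nlinarith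
      rw [hwdef, inner_add_right, real_inner_smul_right, real_inner_smul_right] at hw0
      linarith
    · rw [mulVecE_add, mulVecE_smul, hAEw, hAEx]
      simp
  by_contra hdv
  push_neg at hdv
  set a : ℝ := ⟪d, v⟫ with ha
  set b : ℝ := ⟪d, xb - xstar⟫ with hbdef
  have h12 := hmain (1/2) (by norm_num) (by norm_num)
  have hab' : 0 < a - b := by nlinarith
  have hε := hmain (a / (2 * (a - b))) (by positivity)
    (by rw [div_lt_one (by positivity)]; nlinarith)
  have hq : a / (2 * (a - b)) * (a - b) = a / 2 := by field_simp
  nlinarith [hq, hε, hdv]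

set_option maxHeartbeats 1000000 in
/-- KKT optimality conditions for the conic projection problem under the Slater
condition: `x*` is the projection of `c` onto `P ∩ K` if and only if there exist
multipliers `y ∈ ℝ^{mE}`, `z ∈ ℝ₊^{mI}` and `u ∈ K°` satisfying the
complementarity system. -/
theorem conic_projection_kkt
    {n mE mI : ℕ} (K : Set (EuclideanSpace ℝ (Fin n)))
    (hKcl : IsClosed K) (hKconv : Convex ℝ K)
    (hKcone : ∀ x ∈ K, ∀ t : ℝ, 0 ≤ t → t • x ∈ K)
    (hKint : (interior K).Nonempty)
    (Ko : Set (EuclideanSpace ℝ (Fin n)))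
    (hKo : Ko = {s | ∀ x ∈ K, ⟪s, x⟫ ≤ 0})
    (c : EuclideanSpace ℝ (Fin n))
    (AE : Matrix (Fin mE) (Fin n) ℝ) (bE : EuclideanSpace ℝ (Fin mE))
    (AI : Matrix (Fin mI) (Fin n) ℝ) (bI : EuclideanSpace ℝ (Fin mI))
    (P : Set (EuclideanSpace ℝ (Fin n)))
    (hP : P = {x | mulVecE AE x = bE ∧ ∀ i, mulVecE AI x i ≤ bI i})
    (hSlater : ∃ xb ∈ interior K, mulVecE AE xb = bE ∧ ∀ i, mulVecE AI xb i ≤ bI i)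
    (xstar : EuclideanSpace ℝ (Fin n)) :
    (xstar ∈ P ∩ K ∧ ∀ x ∈ P ∩ K, ‖c - xstar‖ ≤ ‖c - x‖) ↔
      ∃ (y : EuclideanSpace ℝ (Fin mE)) (z : EuclideanSpace ℝ (Fin mI))
        (u : EuclideanSpace ℝ (Fin n)),
        (∀ i, 0 ≤ z i) ∧ u ∈ Ko ∧
        xstar - c + u + mulVecE AEᵀ y + mulVecE AIᵀ z = 0 ∧
        mulVecE AE xstar = bE ∧
        (∀ i, mulVecE AI xstar i ≤ bI i) ∧ ⟪z, mulVecE AI xstar - bI⟫ = 0 ∧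
        xstar ∈ K ∧ ⟪u, xstar⟫ = 0 := by
  classical
  obtain ⟨xb, hxb, hAExb, hAIxb⟩ := hSlater
  have hPconv : Convex ℝ P := by
    rw [hP]
    intro x hx y hy a b ha hb hab
    refine ⟨?_, ?_⟩
    · rw [mulVecE_add, mulVecE_smul, mulVecE_smul, hx.1, hy.1, ← add_smul, hab, one_smul]
    · intro i
      rw [mulVecE_add, mulVecE_smul, mulVecE_smul, PiLp.add_apply, PiLp.smul_apply,
        PiLp.smul_apply, smul_eq_mul, smul_eq_mul]
      calc a * mulVecE AI x i + b * mulVecE AI y i ≤ a * bI i + b * bI i := by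
            apply add_le_add
            · exact mul_le_mul_of_nonneg_left (hx.2 i) ha
            · exact mul_le_mul_of_nonneg_left (hy.2 i) hb
      _ = bI i := by rw [← add_mul, hab, one_mul]
  have hPKconv : Convex ℝ (P ∩ K) := hPconv.inter hKconv
  constructor
  · -- forward direction
    rintro ⟨hxPK, hmin⟩
    obtain ⟨hxP, hxK⟩ := hxPK
    rw [hP] at hxP
    obtain ⟨hAEx, hAIx⟩ := hxP
    haveI : Nonempty ↥(P ∩ K) := ⟨⟨xstar, ⟨by rw [hP]; exact ⟨hAEx, hAIx⟩, hxK⟩⟩⟩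
    -- variational inequality
    have hiInf : ‖c - xstar‖ = ⨅ w : ↥(P ∩ K), ‖c - w‖ := by
      have hbdd : BddBelow (Set.range fun w : ↥(P ∩ K) => ‖c - w‖) := by
        refine ⟨0, ?_⟩
        rintro _ ⟨w, rfl⟩
        exact norm_nonneg _
      refine le_antisymm (le_ciInf fun w => hmin w w.2) (ciInf_le hbdd ⟨xstar, ⟨by
        rw [hP]; exact ⟨hAEx, hAIx⟩, hxK⟩⟩)
    have hVI := (norm_eq_iInf_iff_real_inner_le_zero hPKconv (by
      exact ⟨by rw [hP]; exact ⟨hAEx, hAIx⟩, hxK⟩)).mp hiInf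
    set d : EuclideanSpace ℝ (Fin n) := c - xstar with hd
    -- the multiplier set
    set Mset : Set (EuclideanSpace ℝ (Fin n)) := {m : EuclideanSpace ℝ (Fin n) |
      ∃ (y : EuclideanSpace ℝ (Fin mE)) (z : EuclideanSpace ℝ (Fin mI))
        (u : EuclideanSpace ℝ (Fin n)),
        (∀ i, 0 ≤ z i) ∧ (∀ i, mulVecE AI xstar i ≠ bI i → z i = 0) ∧
        (∀ x ∈ K, ⟪u, x⟫ ≤ 0) ∧ ⟪u, xstar⟫ = 0 ∧
        m = mulVecE AEᵀ y + mulVecE AIᵀ z + u} with hMset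
    have hM0 : (0 : EuclideanSpace ℝ (Fin n)) ∈ Mset := by
      refine ⟨0, 0, 0, fun i => le_refl _, fun i _ => rfl, ?_, ?_, ?_⟩
      · intro x _; rw [inner_zero_left]
      · rw [inner_zero_left]
      · rw [mulVecE_zero, mulVecE_zero]; simp
    have hdM : d ∈ Mset := by
      by_contra hdM
      -- build a convex cone structure on Mset and separate
      have hMcl : IsClosed Mset :=
        isClosed_Mset K AE bE AI bI xstar xb hxb hAExb hAIxb hAEx hAIx
      set MC : ConvexCone ℝ (EuclideanSpace ℝ (Fin n)) :=
        { carrier := Mset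
          smul_mem' := by
            rintro a ha m ⟨y, z, u, hz0, hzsupp, hu, hux, rfl⟩
            refine ⟨a • y, a • z, a • u, ?_, ?_, ?_, ?_, ?_⟩
            · intro i
              rw [PiLp.smul_apply, smul_eq_mul]
              exact mul_nonneg ha.le (hz0 i)
            · intro i hi
              rw [PiLp.smul_apply, smul_eq_mul, hzsupp i hi, mul_zero]
            · intro x hx
              rw [real_inner_smul_left]
              exact mul_nonpos_of_nonneg_of_nonpos ha.le (hu x hx)
            · rw [real_inner_smul_left, hux, mul_zero]
            · rw [mulVecE_smul, mulVecE_smul, smul_add, smul_add]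
          add_mem' := by
            rintro m₁ ⟨y₁, z₁, u₁, hz₁, hs₁, hu₁, hux₁, rfl⟩
              m₂ ⟨y₂, z₂, u₂, hz₂, hs₂, hu₂, hux₂, rfl⟩
            refine ⟨y₁ + y₂, z₁ + z₂, u₁ + u₂, ?_, ?_, ?_, ?_, ?_⟩
            · intro i
              rw [PiLp.add_apply]
              exact add_nonneg (hz₁ i) (hz₂ i)
            · intro i hi
              rw [PiLp.add_apply, hs₁ i hi, hs₂ i hi, add_zero]
            · intro x hx
              rw [inner_add_left]
              exact add_nonpos (hu₁ x hx) (hu₂ x hx)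
            · rw [inner_add_left, hux₁, hux₂, add_zero]
            · rw [mulVecE_add, mulVecE_add]; abel } with hMC
      have hMne : ((MC : ConvexCone ℝ (EuclideanSpace ℝ (Fin n))) :
          Set (EuclideanSpace ℝ (Fin n))).Nonempty := ⟨0, hM0⟩
      obtain ⟨v, hvM, hvd⟩ :=
        old_sep MC hMne hMcl hdM
      -- v yields a contradiction via key_ineq
      have hsep : ∀ m ∈ Mset, ⟪m, -v⟫ ≤ 0 := by
        intro m hm
        rw [inner_neg_right]
        have := hvM m hm
        linarith
      have hvE : mulVecE AE (-v) = 0 := by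
        have h : ∀ y' : EuclideanSpace ℝ (Fin mE), ⟪y', mulVecE AE (-v)⟫ ≤ 0 := by
          intro y'
          have hmem : mulVecE AEᵀ y' ∈ Mset := by
            refine ⟨y', 0, 0, fun i => le_refl _, fun i _ => rfl, ?_, ?_, ?_⟩
            · intro x _; rw [inner_zero_left]
            · rw [inner_zero_left]
            · rw [mulVecE_zero]; simp
          have := hsep _ hmem
          rwa [inner_mulVecE_transpose] at this
        have h2 : ⟪mulVecE AE (-v), mulVecE AE (-v)⟫ ≤ 0 := by
          have := h (mulVecE AE (-v))
          rwa [real_inner_comm] at this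
        have h3 := real_inner_self_nonneg (x := mulVecE AE (-v))
        exact inner_self_eq_zero.mp (le_antisymm h2 h3)
      have hvI : ∀ i, mulVecE AI xstar i = bI i → mulVecE AI (-v) i ≤ 0 := by
        intro i hi
        have hmem : mulVecE AIᵀ (EuclideanSpace.single i (1:ℝ)) ∈ Mset := by
          refine ⟨0, EuclideanSpace.single i (1:ℝ), 0, ?_, ?_, ?_, ?_, ?_⟩
          · intro i'
            rcases eq_or_ne i' i with rfl | hne
            · rw [EuclideanSpace.single_apply]; simp
            · rw [EuclideanSpace.single_apply, if_neg hne]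
          · intro i' hi'
            rw [EuclideanSpace.single_apply]
            have : i' ≠ i := fun h => hi' (h ▸ hi)
            rw [if_neg this]
          · intro x _; rw [inner_zero_left]
          · rw [inner_zero_left]
          · rw [mulVecE_zero]; simp
        have := hsep _ hmem
        rw [inner_mulVecE_transpose, inner_eq_sum] at this
        calc mulVecE AI (-v) i = ∑ i', EuclideanSpace.single i (1:ℝ) i' * mulVecE AI (-v) i' := by
              rw [Finset.sum_eq_single i]
              · rw [EuclideanSpace.single_apply, if_pos rfl, one_mul]
              · intro b _ hb
                rw [EuclideanSpace.single_apply, if_neg hb, zero_mul]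
              · intro h; exact absurd (Finset.mem_univ i) h
        _ ≤ 0 := this
      have hvK : ∀ u : EuclideanSpace ℝ (Fin n),
          (∀ x ∈ K, ⟪u, x⟫ ≤ 0) → ⟪u, xstar⟫ = 0 → ⟪u, -v⟫ ≤ 0 := by
        intro u hu hux
        apply hsep
        refine ⟨0, 0, u, fun i => le_refl _, fun i _ => rfl, hu, hux, ?_⟩
        rw [mulVecE_zero, mulVecE_zero]; simp
      have hVI' : ∀ x, mulVecE AE x = bE → (∀ i, mulVecE AI x i ≤ bI i) → x ∈ K →
          ⟪d, x - xstar⟫ ≤ 0 := by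
        intro x h1 h2 h3
        exact hVI x ⟨by rw [hP]; exact ⟨h1, h2⟩, h3⟩
      have := key_ineq K hKcl hKconv hKcone AE bE AI bI xstar hxK hAEx hAIx xb hxb
        hAExb hAIxb d hVI' (-v) hvE hvI hvK
      rw [inner_neg_right] at this
      rw [real_inner_comm] at hvd
      linarith
    obtain ⟨y, z, u, hz0, hzsupp, hu, hux, heq⟩ := hdM
    refine ⟨y, z, u, hz0, ?_, ?_, hAEx, hAIx, ?_, hxK, hux⟩
    · rw [hKo]; exact hu
    · rw [show xstar - c + u + mulVecE AEᵀ y + mulVecE AIᵀ z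
        = -(c - xstar) + (mulVecE AEᵀ y + mulVecE AIᵀ z + u) by abel, ← hd, heq]
      abel
    · rw [inner_eq_sum]
      apply Finset.sum_eq_zero
      intro i _
      rcases eq_or_ne (mulVecE AI xstar i) (bI i) with h | h
      · rw [PiLp.sub_apply, h, sub_self, mul_zero]
      · rw [hzsupp i h, zero_mul]
  · -- backward direction
    rintro ⟨y, z, u, hz0, huKo, heq, hAEx, hAIx, hcomp, hxK, hux⟩
    rw [hKo] at huKo
    have hxPK : xstar ∈ P ∩ K := ⟨by rw [hP]; exact ⟨hAEx, hAIx⟩, hxK⟩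
    haveI : Nonempty ↥(P ∩ K) := ⟨⟨xstar, hxPK⟩⟩
    refine ⟨hxPK, ?_⟩
    have hdec : c - xstar = u + mulVecE AEᵀ y + mulVecE AIᵀ z := by
      have : xstar - c + (u + mulVecE AEᵀ y + mulVecE AIᵀ z) = 0 := by
        rw [← heq]; abel
      have h2 := congrArg (fun w => w - (xstar - c)) this
      rw [show xstar - c + (u + mulVecE AEᵀ y + mulVecE AIᵀ z) - (xstar - c)
        = u + mulVecE AEᵀ y + mulVecE AIᵀ z by abel] at h2
      rw [h2]
      abel
    have hVI : ∀ w ∈ P ∩ K, ⟪c - xstar, w - xstar⟫ ≤ 0 := by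
      rintro w ⟨hwP, hwK⟩
      rw [hP] at hwP
      obtain ⟨hwE, hwI⟩ := hwP
      rw [hdec, inner_add_left, inner_add_left]
      have t1 : ⟪u, w - xstar⟫ ≤ 0 := by
        rw [inner_sub_right, hux, sub_zero]
        exact huKo w hwK
      have t2 : ⟪mulVecE AEᵀ y, w - xstar⟫ = 0 := by
        rw [inner_mulVecE_transpose, mulVecE_sub, hwE, hAEx, sub_self, inner_zero_right]
      have t3 : ⟪mulVecE AIᵀ z, w - xstar⟫ ≤ 0 := by
        rw [inner_mulVecE_transpose, mulVecE_sub]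
        have hsplit : mulVecE AI w - mulVecE AI xstar
            = (mulVecE AI w - bI) - (mulVecE AI xstar - bI) := by abel
        rw [hsplit, inner_sub_right, hcomp, sub_zero, inner_eq_sum]
        apply Finset.sum_nonpos
        intro i _
        apply mul_nonpos_of_nonneg_of_nonpos (hz0 i)
        rw [PiLp.sub_apply]
        linarith [hwI i]
      linarith
    intro x hx
    have hiInf := (norm_eq_iInf_iff_real_inner_le_zero hPKconv hxPK).mpr hVI
    rw [hiInf]
    have hbdd : BddBelow (Set.range fun w : ↥(P ∩ K) => ‖c - w‖) := by
      refine ⟨0, ?_⟩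
      rintro _ ⟨w, rfl⟩
      exact norm_nonneg _
    exact ciInf_le hbdd ⟨x, hx⟩
end

section
/- (Global convergence of the proximal algorithm.) Let S be a nonempty closed convex subset of ℝⁿ and c ∈ ℝⁿ, and assume the problem min{⟨c,x⟩ : x ∈ S} has at least one solution. Let (t_k) be a sequence of positive reals bounded away from 0 (t_k ≥ t̄ > 0 for all k), and let (ε_k) be a sequence of nonnegative reals with ∑_k ε_k < +∞. Suppose the sequence (p_k) in ℝⁿ satisfies ‖p_{k+1} − q_k‖ ≤ ε_k for all k, where q_k is the unique minimizer over x ∈ S of ⟨c,x⟩ + (1/(2t_k))‖x − p_k‖². Then (p_k) converges to a point p̄ ∈ S with ⟨c, p̄⟩ ≤ ⟨c, x⟩ for all x ∈ S, i.e., to a solution of min{⟨c,x⟩ : x ∈ S}. -/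
open scoped RealInnerProductSpace
open Filter

/-- From square comparison to comparison, for nonnegative reals. -/
lemma le_of_sq_le_sq' {a b : ℝ} (ha : 0 ≤ a) (hb : 0 ≤ b) (h : a ^ 2 ≤ b ^ 2) : a ≤ b := by
  nlinarith

/-- Strong-convexity inequality for the prox minimizer. -/
lemma prox_key {E : Type*} [NormedAddCommGroup E] [InnerProductSpace ℝ E]
    {S : Set E} (hSconv : Convex ℝ S) {c p q : E} {t : ℝ} (ht : 0 < t)
    (hqS : q ∈ S)
    (hmin : ∀ x ∈ S, ⟪c, q⟫ + (1 / (2 * t)) * ‖q - p‖ ^ 2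
        ≤ ⟪c, x⟫ + (1 / (2 * t)) * ‖x - p‖ ^ 2) :
    ∀ x ∈ S, ‖x - q‖ ^ 2 + ‖q - p‖ ^ 2 + 2 * t * (⟪c, q⟫ - ⟪c, x⟫) ≤ ‖x - p‖ ^ 2 := by
  intro x hx
  have hstep : ∀ l : ℝ, l ∈ Set.Ioo (0:ℝ) 1 →
      (1 - l) * ‖x - q‖ ^ 2 + ‖q - p‖ ^ 2 + 2 * t * (⟪c, q⟫ - ⟪c, x⟫) ≤ ‖x - p‖ ^ 2 := by
    intro l hl
    obtain ⟨hl0, hl1⟩ := hl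
    have hxl : q + l • (x - q) ∈ S := by
      have := hSconv hqS hx (by linarith : (0:ℝ) ≤ 1 - l) hl0.le (by ring)
      convert this using 1
      module
    have h := hmin _ hxl
    have hinner : ⟪c, q + l • (x - q)⟫ = ⟪c, q⟫ + l * (⟪c, x⟫ - ⟪c, q⟫) := by
      rw [inner_add_right, real_inner_smul_right, inner_sub_right]
    have hptq : x - p = (q - p) + (x - q) := by abel
    have hexp1 : ‖(q - p) + (x - q)‖ ^ 2
        = ‖q - p‖ ^ 2 + 2 * ⟪q - p, x - q⟫ + ‖x - q‖ ^ 2 := norm_add_sq_real _ _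
    have hexp2 : ‖q + l • (x - q) - p‖ ^ 2
        = ‖q - p‖ ^ 2 + 2 * (l * ⟪q - p, x - q⟫) + l ^ 2 * ‖x - q‖ ^ 2 := by
      have : q + l • (x - q) - p = (q - p) + l • (x - q) := by abel
      rw [this, norm_add_sq_real, real_inner_smul_right, norm_smul]
      simp [abs_of_pos hl0]
      ring
    rw [hinner, hexp2] at h
    rw [hptq, hexp1]
    have h2t : (0:ℝ) < 2 * t := by linarith
    have ht' : t ≠ 0 := ne_of_gt ht
    field_simp at h
    have hgl : 0 ≤ l * (2 * t * (⟪c, x⟫ - ⟪c, q⟫) + 2 * ⟪q - p, x - q⟫ + l * ‖x - q‖ ^ 2) := by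
      linarith [h]
    have hg : 0 ≤ 2 * t * (⟪c, x⟫ - ⟪c, q⟫) + 2 * ⟪q - p, x - q⟫ + l * ‖x - q‖ ^ 2 :=
      nonneg_of_mul_nonneg_right hgl hl0
    linarith
  have hlim : Filter.Tendsto (fun l : ℝ =>
      (1 - l) * ‖x - q‖ ^ 2 + ‖q - p‖ ^ 2 + 2 * t * (⟪c, q⟫ - ⟪c, x⟫))
      (nhdsWithin 0 (Set.Ioi 0)) (nhds (‖x - q‖ ^ 2 + ‖q - p‖ ^ 2 + 2 * t * (⟪c, q⟫ - ⟪c, x⟫))) := by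
    have : Filter.Tendsto (fun l : ℝ =>
        (1 - l) * ‖x - q‖ ^ 2 + ‖q - p‖ ^ 2 + 2 * t * (⟪c, q⟫ - ⟪c, x⟫))
        (nhds 0) (nhds ((1 - 0) * ‖x - q‖ ^ 2 + ‖q - p‖ ^ 2 + 2 * t * (⟪c, q⟫ - ⟪c, x⟫))) := by
      have hc : Continuous fun l : ℝ =>
          (1 - l) * ‖x - q‖ ^ 2 + ‖q - p‖ ^ 2 + 2 * t * (⟪c, q⟫ - ⟪c, x⟫) := by
        continuity
      exact hc.tendsto 0
    simpa using this.mono_left nhdsWithin_le_nhds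
  refine le_of_tendsto hlim ?_
  filter_upwards [Ioo_mem_nhdsGT_of_mem (Set.mem_Ico.mpr ⟨le_refl 0, one_pos⟩)] with l hl
  exact hstep l hl


/-- Global convergence of the (inexact) proximal algorithm for the linear problem
`min {⟨c,x⟩ : x ∈ S}` over a nonempty closed convex set `S`: if the problem has a
solution, the prox-parameters `t k` are bounded away from `0`, the errors `ε k` are
nonnegative and summable, and `‖p (k+1) − q k‖ ≤ ε k` where `q k` is the unique
minimizer over `S` of `x ↦ ⟨c,x⟩ + ‖x − p k‖²/(2 t k)`, then `(p k)` converges to a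
solution of `min {⟨c,x⟩ : x ∈ S}`. -/
theorem proximal_algorithm_global_convergence
    {n : ℕ} (S : Set (EuclideanSpace ℝ (Fin n)))
    (hSne : S.Nonempty) (hScl : IsClosed S) (hSconv : Convex ℝ S)
    (c : EuclideanSpace ℝ (Fin n))
    (hsol : ∃ xstar ∈ S, ∀ x ∈ S, ⟪c, xstar⟫ ≤ ⟪c, x⟫)
    (t : ℕ → ℝ) (tbar : ℝ) (htbar : 0 < tbar) (ht : ∀ k, tbar ≤ t k)
    (ε : ℕ → ℝ) (hεnn : ∀ k, 0 ≤ ε k) (hεsum : Summable ε)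
    (p q : ℕ → EuclideanSpace ℝ (Fin n))
    (hq : ∀ k, q k ∈ S ∧
      (∀ x ∈ S, ⟪c, q k⟫ + (1 / (2 * t k)) * ‖q k - p k‖ ^ 2
          ≤ ⟪c, x⟫ + (1 / (2 * t k)) * ‖x - p k‖ ^ 2) ∧
      ∀ x ∈ S, ⟪c, x⟫ + (1 / (2 * t k)) * ‖x - p k‖ ^ 2
          = ⟪c, q k⟫ + (1 / (2 * t k)) * ‖q k - p k‖ ^ 2 → x = q k)
    (hp : ∀ k, ‖p (k + 1) - q k‖ ≤ ε k) :
    ∃ pbar, pbar ∈ S ∧ (∀ x ∈ S, ⟪c, pbar⟫ ≤ ⟪c, x⟫) ∧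
      Filter.Tendsto p Filter.atTop (nhds pbar) := by
  obtain ⟨xs, hxsS, hxs⟩ := hsol
  have htpos : ∀ k, 0 < t k := fun k => lt_of_lt_of_le htbar (ht k)
  have hkey : ∀ k, ∀ x ∈ S,
      ‖x - q k‖ ^ 2 + ‖q k - p k‖ ^ 2 + 2 * t k * (⟪c, q k⟫ - ⟪c, x⟫) ≤ ‖x - p k‖ ^ 2 :=
    fun k => prox_key hSconv (htpos k) (hq k).1 (hq k).2.1
  -- Fejér step for any solution z
  have hfej : ∀ z ∈ S, (∀ x ∈ S, ⟪c, z⟫ ≤ ⟪c, x⟫) → ∀ k, ‖q k - z‖ ≤ ‖p k - z‖ := by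
    intro z hz hzopt k
    have h1 := hkey k z hz
    have h2 : 0 ≤ ⟪c, q k⟫ - ⟪c, z⟫ := sub_nonneg.mpr (hzopt _ (hq k).1)
    have h3 : ‖z - q k‖ ^ 2 ≤ ‖z - p k‖ ^ 2 := by
      nlinarith [sq_nonneg ‖q k - p k‖, mul_nonneg (by linarith [htpos k] : (0:ℝ) ≤ 2 * t k) h2]
    rw [norm_sub_rev z (q k), norm_sub_rev z (p k)] at h3
    exact le_of_sq_le_sq' (norm_nonneg _) (norm_nonneg _) h3
  -- chain bound
  have hchain : ∀ z ∈ S, (∀ x ∈ S, ⟪c, z⟫ ≤ ⟪c, x⟫) → ∀ k m,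
      ‖p (k + m) - z‖ ≤ ‖p k - z‖ + ∑ j ∈ Finset.range m, ε (k + j) := by
    intro z hz hzopt k m
    induction m with
    | zero => simp
    | succ m ih =>
      have htri : ‖p (k + m + 1) - z‖ ≤ ‖p (k + m + 1) - q (k + m)‖ + ‖q (k + m) - z‖ := by
        have := dist_triangle (p (k + m + 1)) (q (k + m)) z
        simpa [dist_eq_norm] using this
      have h4 := hfej z hz hzopt (k + m)
      have h5 := hp (k + m)
      have : ‖p (k + m + 1) - z‖ ≤ ε (k + m) + ‖p (k + m) - z‖ := by linarith
      calc ‖p (k + (m + 1)) - z‖ = ‖p (k + m + 1) - z‖ := by ring_nf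
        _ ≤ ε (k + m) + ‖p (k + m) - z‖ := this
        _ ≤ ε (k + m) + (‖p k - z‖ + ∑ j ∈ Finset.range m, ε (k + j)) := by linarith
        _ = ‖p k - z‖ + ∑ j ∈ Finset.range (m + 1), ε (k + j) := by
            rw [Finset.sum_range_succ]; ring
  set E := ∑' k, ε k with hE
  have hEnn : 0 ≤ E := tsum_nonneg hεnn
  have hεleE : ∀ k, ε k ≤ E := fun k => Summable.le_tsum hεsum k fun j _ => hεnn j
  have hpartial : ∀ k m, ∑ j ∈ Finset.range m, ε (k + j) ≤ E - ∑ i ∈ Finset.range k, ε i := by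
    intro k m
    have hsub : Summable fun i => ε (i + k) := (summable_nat_add_iff k).mpr hεsum
    have h1 : ∑ j ∈ Finset.range m, ε (k + j) ≤ ∑' i, ε (i + k) := by
      have : ∑ j ∈ Finset.range m, ε (k + j) = ∑ j ∈ Finset.range m, ε (j + k) := by
        refine Finset.sum_congr rfl fun j _ => by rw [add_comm]
      rw [this]
      exact Summable.sum_le_tsum _ (fun i _ => hεnn _) hsub
    have h2 := Summable.sum_add_tsum_nat_add k hεsum
    linarith
  set M := ‖p 0 - xs‖ + E with hM
  have hbound : ∀ k, ‖p k - xs‖ ≤ M := by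
    intro k
    have := hchain xs hxsS hxs 0 k
    have h2 := hpartial 0 k
    simp only [zero_add, Finset.range_zero, Finset.sum_empty, sub_zero] at this h2
    calc ‖p k - xs‖ ≤ ‖p 0 - xs‖ + ∑ j ∈ Finset.range k, ε j := this
      _ ≤ ‖p 0 - xs‖ + E := by linarith
  have hMnn : 0 ≤ M := le_trans (norm_nonneg _) (hbound 0)
  set s := fun k => ‖q k - p k‖ ^ 2 + 2 * tbar * (⟪c, q k⟫ - ⟪c, xs⟫) with hs
  have hδnn : ∀ k, 0 ≤ ⟪c, q k⟫ - ⟪c, xs⟫ := fun k => sub_nonneg.mpr (hxs _ (hq k).1)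
  have hsnn : ∀ k, 0 ≤ s k := fun k =>
    add_nonneg (sq_nonneg _) (mul_nonneg (by linarith) (hδnn k))
  have hone : ∀ k, ‖p (k + 1) - xs‖ ^ 2 + s k ≤ ‖p k - xs‖ ^ 2 + (2 * M + E) * ε k := by
    intro k
    have h1 := hkey k xs hxsS
    have hqx : ‖q k - xs‖ ≤ ‖p k - xs‖ := hfej xs hxsS hxs k
    have htri : ‖p (k + 1) - xs‖ ≤ ε k + ‖q k - xs‖ := by
      have := dist_triangle (p (k + 1)) (q k) xs
      simp [dist_eq_norm] at this
      linarith [hp k]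
    have hsq : ‖p (k + 1) - xs‖ ^ 2 ≤ (ε k + ‖q k - xs‖) ^ 2 := by
      have h0 : 0 ≤ ‖p (k + 1) - xs‖ := norm_nonneg _
      nlinarith
    have hqxM : ‖q k - xs‖ ≤ M := le_trans hqx (hbound k)
    have hεE := hεleE k
    have hεk := hεnn k
    have hδ := hδnn k
    have htk : 2 * tbar * (⟪c, q k⟫ - ⟪c, xs⟫) ≤ 2 * t k * (⟪c, q k⟫ - ⟪c, xs⟫) := by
      have := ht k
      nlinarith
    have hrev : ‖xs - q k‖ = ‖q k - xs‖ := norm_sub_rev _ _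
    have hrev2 : ‖xs - p k‖ = ‖p k - xs‖ := norm_sub_rev _ _
    rw [hrev, hrev2] at h1
    simp only [hs]
    nlinarith [sq_nonneg (ε k), norm_nonneg (q k - xs)]
  have hsum_s : Summable s := by
    apply summable_of_sum_range_le (c := ‖p 0 - xs‖ ^ 2 + (2 * M + E) * E) hsnn
    intro m
    have hstep : ∀ m, ∑ k ∈ Finset.range m, s k + ‖p m - xs‖ ^ 2
        ≤ ‖p 0 - xs‖ ^ 2 + (2 * M + E) * ∑ k ∈ Finset.range m, ε k := by
      intro m
      induction m with
      | zero => simp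
      | succ m ih =>
        have h := hone m
        rw [Finset.sum_range_succ, Finset.sum_range_succ]
        have hexpand : (2 * M + E) * (∑ k ∈ Finset.range m, ε k + ε m)
            = (2 * M + E) * ∑ k ∈ Finset.range m, ε k + (2 * M + E) * ε m := by ring
        rw [hexpand]
        linarith
    have h1 := hstep m
    have h2 : ∑ k ∈ Finset.range m, ε k ≤ E := by
      have := hpartial 0 m
      simpa using this
    have h3 : (0:ℝ) ≤ 2 * M + E := by linarith
    nlinarith [sq_nonneg ‖p m - xs‖, mul_le_mul_of_nonneg_left h2 h3]
  have hs0 : Tendsto s atTop (nhds 0) := hsum_s.tendsto_atTop_zero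
  have hd0 : Tendsto (fun k => ‖q k - p k‖) atTop (nhds 0) := by
    have hsqrt : Tendsto (fun k => Real.sqrt (s k)) atTop (nhds 0) := by
      have := (Real.continuous_sqrt.tendsto 0).comp hs0
      simpa [Function.comp_def] using this
    refine squeeze_zero (fun k => norm_nonneg _) (fun k => ?_) hsqrt
    have h1 : ‖q k - p k‖ ^ 2 ≤ s k := by
      have := mul_nonneg (by linarith : (0:ℝ) ≤ 2 * tbar) (hδnn k)
      simp only [hs]; linarith
    calc ‖q k - p k‖ = Real.sqrt (‖q k - p k‖ ^ 2) := by
          rw [Real.sqrt_sq (norm_nonneg _)]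
      _ ≤ Real.sqrt (s k) := Real.sqrt_le_sqrt h1
  have hδ0 : Tendsto (fun k => ⟪c, q k⟫ - ⟪c, xs⟫) atTop (nhds 0) := by
    have hub : Tendsto (fun k => s k / (2 * tbar)) atTop (nhds 0) := by
      have := hs0.div_const (2 * tbar)
      simpa using this
    refine squeeze_zero hδnn (fun k => ?_) hub
    rw [le_div_iff₀ (by linarith : (0:ℝ) < 2 * tbar)]
    have := sq_nonneg ‖q k - p k‖
    simp only [hs]; linarith
  -- Bolzano–Weierstrass
  have hpball : ∀ k, p k ∈ Metric.closedBall xs M := by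
    intro k
    rw [Metric.mem_closedBall, dist_eq_norm]
    exact hbound k
  obtain ⟨a, -, φ, hφ, hpφ⟩ :=
    tendsto_subseq_of_bounded Metric.isBounded_closedBall hpball
  have hφtop : Tendsto φ atTop atTop := hφ.tendsto_atTop
  have hqφ : Tendsto (fun j => q (φ j)) atTop (nhds a) := by
    have hdφ : Tendsto (fun j => q (φ j) - p (φ j)) atTop (nhds 0) := by
      rw [tendsto_zero_iff_norm_tendsto_zero]
      exact (hd0.comp hφtop)
    have := hdφ.add hpφ
    simp only [Function.comp] at this ⊢
    simpa using this
  have haS : a ∈ S := hScl.mem_of_tendsto hqφ (Filter.Eventually.of_forall fun j => (hq _).1)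
  have hca : ⟪c, a⟫ = ⟪c, xs⟫ := by
    have hcont : Continuous fun v : EuclideanSpace ℝ (Fin n) => ⟪c, v⟫ :=
      continuous_const.inner continuous_id
    have h1 : Tendsto (fun j => ⟪c, q (φ j)⟫ - ⟪c, xs⟫) atTop (nhds (⟪c, a⟫ - ⟪c, xs⟫)) :=
      ((hcont.tendsto a).comp hqφ).sub tendsto_const_nhds
    have h2 : Tendsto (fun j => ⟪c, q (φ j)⟫ - ⟪c, xs⟫) atTop (nhds 0) := hδ0.comp hφtop
    have := tendsto_nhds_unique h1 h2
    linarith [this]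
  have haopt : ∀ x ∈ S, ⟪c, a⟫ ≤ ⟪c, x⟫ := fun x hx => hca ▸ hxs x hx
  refine ⟨a, haS, haopt, ?_⟩
  rw [Metric.tendsto_atTop]
  intro η hη
  -- tails of ε small
  have htail : Tendsto (fun k => E - ∑ i ∈ Finset.range k, ε i) atTop (nhds 0) := by
    have := hεsum.hasSum.tendsto_sum_nat
    have h2 := (tendsto_const_nhds (x := E) (f := atTop (α := ℕ))).sub this
    simpa [hE] using h2
  obtain ⟨K₁, hK₁⟩ := (htail.eventually (gt_mem_nhds (by linarith : (0:ℝ) < η / 2))).exists_forall_of_atTop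
  obtain ⟨J, hJ⟩ := (Metric.tendsto_atTop.mp hpφ (η / 2) (by linarith)).imp (fun J h => h)
  set j := max J K₁ with hj
  set N := φ j with hN
  refine ⟨N, fun m hm => ?_⟩
  have hjN : K₁ ≤ N := le_trans (le_max_right J K₁) (le_trans hφ.le_apply (le_refl N))
  have hpNa : dist (p N) a < η / 2 := by
    have := hJ j (le_max_left J K₁)
    simpa [Function.comp] using this
  obtain ⟨d, rfl⟩ : ∃ d, m = N + d := ⟨m - N, by omega⟩
  have hchain2 := hchain a haS haopt N d
  have hpart := hpartial N d
  have htailN : E - ∑ i ∈ Finset.range N, ε i < η / 2 := hK₁ N hjN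
  rw [dist_eq_norm]
  rw [dist_eq_norm] at hpNa
  calc ‖p (N + d) - a‖ ≤ ‖p N - a‖ + ∑ j ∈ Finset.range d, ε (N + j) := hchain2
    _ < η / 2 + η / 2 := by
        have : ∑ j ∈ Finset.range d, ε (N + j) ≤ E - ∑ i ∈ Finset.range N, ε i := hpart
        have h0 : (0:ℝ) ≤ ∑ j ∈ Finset.range d, ε (N + j) :=
          Finset.sum_nonneg fun i _ => hεnn _
        linarith
    _ = η := by ring
end

section
/- (Convergence of Dykstra's corrected alternating projections.) Let K be a nonempty closed convex subset of ℝⁿ, let 𝒜 = {x ∈ ℝⁿ : Ax = b} be a nonempty affine subspace (A ∈ ℝ^{m×n}, b ∈ ℝᵐ), and assume K ∩ 𝒜 ≠ ∅. Given c ∈ ℝⁿ, define sequences by z₀ = c and, for k ≥ 0: x_{k+1} = proj_K(z_k), y_{k+1} = proj_𝒜(x_{k+1}), z_{k+1} = z_k − (x_{k+1} − y_{k+1}). Then the sequence (x_k) converges to proj_{K∩𝒜}(c), the projection of c onto the intersection K ∩ 𝒜. -/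
open scoped Matrix RealInnerProductSpace
open Filter

lemma var_ineq {E : Type*} [NormedAddCommGroup E] [InnerProductSpace ℝ E] {S : Set E}
    (hS : Convex ℝ S) {w u : E} (hu : u ∈ S)
    (hmin : ∀ v ∈ S, ‖w - u‖ ≤ ‖w - v‖) : ∀ v ∈ S, ⟪w - u, v - u⟫ ≤ 0 := by
  refine (norm_eq_iInf_iff_real_inner_le_zero hS hu).1 ?_
  haveI : Nonempty S := ⟨⟨u, hu⟩⟩
  refine le_antisymm (le_ciInf fun v => hmin v v.2) ?_
  have hbdd : BddBelow (Set.range fun v : S => ‖w - (v:E)‖) := by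
    refine ⟨0, ?_⟩; rintro r ⟨v, rfl⟩; exact norm_nonneg _
  exact ciInf_le hbdd ⟨u, hu⟩

lemma dyk_id {E : Type*} [NormedAddCommGroup E] [InnerProductSpace ℝ E]
    (P Y X W S x1 : E) :
    (‖Y - S‖^2 + 2*⟪P, x1 - S⟫) - (‖W - S‖^2 + 2*⟪P + Y - X, X - S⟫)
    = ‖Y - X‖^2 + ‖X - W‖^2 - 2*⟪P, X - x1⟫ + 2*⟪X - W, W - S⟫ := by
  have h1 : ‖Y - S‖^2 = ‖Y - X‖^2 + 2*⟪Y - X, X - S⟫ + ‖X - S‖^2 := by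
    have := norm_add_sq_real (Y - X) (X - S); rw [show Y - X + (X - S) = Y - S by abel] at this
    linarith
  have h2 : ‖X - S‖^2 = ‖X - W‖^2 + 2*⟪X - W, W - S⟫ + ‖W - S‖^2 := by
    have := norm_add_sq_real (X - W) (W - S); rw [show X - W + (W - S) = X - S by abel] at this
    linarith
  have h3 : ⟪P + Y - X, X - S⟫ = ⟪P, X - S⟫ + ⟪Y - X, X - S⟫ := by
    rw [show P + Y - X = P + (Y - X) by abel, inner_add_left]
  have h4 : ⟪P, x1 - S⟫ - ⟪P, X - S⟫ = - ⟪P, X - x1⟫ := by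
    rw [← inner_sub_right, ← inner_neg_right]; congr 1; abel
  linarith

/-- Convergence of the alternating projection method with Dykstra's correction:
for a nonempty closed convex set `K` and a nonempty affine subspace
`𝒜 = {x : Ax = b}` with `K ∩ 𝒜 ≠ ∅`, the sequence `(x k)` produced by
`z 0 = c`, `x (k+1) = proj_K (z k)`, `y (k+1) = proj_𝒜 (x (k+1))`,
`z (k+1) = z k − (x (k+1) − y (k+1))` converges to the projection of `c`
onto `K ∩ 𝒜`. -/
theorem dykstra_convergence
    {m n : ℕ} (K : Set (EuclideanSpace ℝ (Fin n)))
    (hKne : K.Nonempty) (hKcl : IsClosed K) (hKconv : Convex ℝ K)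
    (A : Matrix (Fin m) (Fin n) ℝ) (b : EuclideanSpace ℝ (Fin m))
    (Aff : Set (EuclideanSpace ℝ (Fin n)))
    (hAff : Aff = {x | mulVecE A x = b}) (hAffne : Aff.Nonempty)
    (hKA : (K ∩ Aff).Nonempty)
    (projK projAff projInt : EuclideanSpace ℝ (Fin n) → EuclideanSpace ℝ (Fin n))
    (hprojK : ∀ w, projK w ∈ K ∧ ∀ v ∈ K, ‖w - projK w‖ ≤ ‖w - v‖)
    (hprojAff : ∀ w, projAff w ∈ Aff ∧ ∀ v ∈ Aff, ‖w - projAff w‖ ≤ ‖w - v‖)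
    (hprojInt : ∀ w, projInt w ∈ K ∩ Aff ∧ ∀ v ∈ K ∩ Aff, ‖w - projInt w‖ ≤ ‖w - v‖)
    (c : EuclideanSpace ℝ (Fin n))
    (x y z : ℕ → EuclideanSpace ℝ (Fin n))
    (hz0 : z 0 = c)
    (hx : ∀ k, x (k + 1) = projK (z k))
    (hy : ∀ k, y (k + 1) = projAff (x (k + 1)))
    (hz : ∀ k, z (k + 1) = z k - (x (k + 1) - y (k + 1))) :
    Filter.Tendsto x Filter.atTop (nhds (projInt c)) := by
  -- basic structure of Aff
  have hAffConv : Convex ℝ Aff := by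
    rw [hAff]
    intro u hu v hv a b' ha hb' hab
    simp only [Set.mem_setOf_eq, mulVecE] at *
    rw [WithLp.ofLp_add, WithLp.ofLp_smul, WithLp.ofLp_smul, Matrix.mulVec_add, Matrix.mulVec_smul, Matrix.mulVec_smul, WithLp.toLp_add, WithLp.toLp_smul, WithLp.toLp_smul, hu, hv, ← add_smul, hab,
      one_smul]
  have hAffCl : IsClosed Aff := by
    have hcont : Continuous (mulVecE A) := by
      unfold mulVecE; fun_prop
    rw [hAff]
    exact isClosed_singleton.preimage hcont
  have hRefl : ∀ u ∈ Aff, ∀ v ∈ Aff, (2:ℝ) • u - v ∈ Aff := by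
    rw [hAff]
    intro u hu v hv
    simp only [Set.mem_setOf_eq, mulVecE] at *
    rw [WithLp.ofLp_sub, WithLp.ofLp_smul, Matrix.mulVec_sub, Matrix.mulVec_smul, WithLp.toLp_sub, WithLp.toLp_smul, hu, hv]
    module
  -- the target point
  set s := projInt c with hs_def
  have hsK : s ∈ K := (hprojInt c).1.1
  have hsAff : s ∈ Aff := (hprojInt c).1.2
  have hVI : ∀ v ∈ K ∩ Aff, ⟪c - s, v - s⟫ ≤ 0 :=
    var_ineq (hKconv.inter hAffConv) (hprojInt c).1 (hprojInt c).2
  -- memberships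
  have hxK : ∀ k, x (k+1) ∈ K := fun k => (hx k) ▸ (hprojK (z k)).1
  have hyA : ∀ k, y (k+1) ∈ Aff := fun k => (hy k) ▸ (hprojAff (x (k+1))).1
  -- variational inequalities
  have VK : ∀ k, ∀ v ∈ K, ⟪z k - x (k+1), v - x (k+1)⟫ ≤ 0 := by
    intro k; rw [hx k]; exact var_ineq hKconv (hprojK (z k)).1 (hprojK (z k)).2
  have VA : ∀ k, ∀ v ∈ Aff, ⟪x (k+1) - y (k+1), v - y (k+1)⟫ = 0 := by
    intro k v hv
    have hVAle : ∀ v ∈ Aff, ⟪x (k+1) - y (k+1), v - y (k+1)⟫ ≤ 0 := by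
      rw [hy k]
      exact var_ineq hAffConv (hprojAff (x (k+1))).1 (hprojAff (x (k+1))).2
    have h1 := hVAle v hv
    have h2 := hVAle ((2:ℝ) • y (k+1) - v) (hRefl _ (hyA k) _ hv)
    have h3 : (2:ℝ) • y (k+1) - v - y (k+1) = -(v - y (k+1)) := by module
    rw [h3, inner_neg_right] at h2
    linarith
  have VAd : ∀ k, ∀ u ∈ Aff, ∀ v ∈ Aff, ⟪x (k+1) - y (k+1), u - v⟫ = 0 := by
    intro k u hu v hv
    have := VA k u hu; have h2 := VA k v hv
    have : ⟪x (k+1) - y (k+1), (u - y (k+1)) - (v - y (k+1))⟫ = 0 := by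
      rw [inner_sub_right, this, h2, sub_zero]
    simpa [show (u - y (k+1)) - (v - y (k+1)) = u - v by abel] using this
  have Qorth : ∀ k, ∀ u ∈ Aff, ∀ v ∈ Aff, ⟪c - z k, u - v⟫ = 0 := by
    intro k
    induction k with
    | zero => intro u hu v hv; simp [hz0]
    | succ k ih =>
      intro u hu v hv
      have hcz : c - z (k+1) = (c - z k) + (x (k+1) - y (k+1)) := by rw [hz k]; abel
      rw [hcz, inner_add_left, ih u hu v hv, VAd k u hu v hv, add_zero]
  -- the Lyapunov function
  set φ : ℕ → ℝ := fun k => ‖y (k+1) - s‖^2 + 2*⟪z k - x (k+1), x (k+1) - s⟫ with hφ_def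
  clear_value φ
  have hg0 : ∀ k, 0 ≤ ⟪z k - x (k+1), x (k+1) - s⟫ := by
    intro k
    have := VK k s hsK
    have h2 : ⟪z k - x (k+1), x (k+1) - s⟫ = - ⟪z k - x (k+1), s - x (k+1)⟫ := by
      rw [← inner_neg_right]; congr 1; abel
    linarith
  have hφ0 : ∀ k, 0 ≤ φ k := by
    intro k; have := hg0 k; have := sq_nonneg ‖y (k+1) - s‖; simp only [hφ_def]; positivity
  -- the decrease identity
  have hid : ∀ k, φ k - φ (k+1) =
      ‖y (k+1) - x (k+2)‖^2 + ‖x (k+2) - y (k+2)‖^2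
        - 2*⟪z k - x (k+1), x (k+2) - x (k+1)⟫ := by
    intro k
    have hP : z (k+1) - x (k+2) = (z k - x (k+1)) + y (k+1) - x (k+2) := by
      rw [hz k]; abel
    have := dyk_id (z k - x (k+1)) (y (k+1)) (x (k+2)) (y (k+2)) s (x (k+1))
    rw [← hP] at this
    have hlast : ⟪x (k+2) - y (k+2), y (k+2) - s⟫ = 0 := by
      have := VA (k+1) s hsAff
      have h2 : ⟪x (k+2) - y (k+2), y (k+2) - s⟫ = - ⟪x (k+2) - y (k+2), s - y (k+2)⟫ := by
        rw [← inner_neg_right]; congr 1; abel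
      rw [h2, this, neg_zero]
    simp only [hφ_def]
    simp only [show k+1+1 = k+2 by omega]
    linarith [this, hlast]
  have hdiff3 : ∀ k, 0 ≤ - ⟪z k - x (k+1), x (k+2) - x (k+1)⟫ := by
    intro k; have := VK k (x (k+2)) (hxK (k+1)); linarith
  have hφdec : ∀ k, φ (k+1) ≤ φ k := by
    intro k
    have := hid k; have := hdiff3 k
    have h1 := sq_nonneg ‖y (k+1) - x (k+2)‖
    have h2 := sq_nonneg ‖x (k+2) - y (k+2)‖
    linarith
  have hq2 : ∀ k, ‖x (k+2) - y (k+2)‖^2 ≤ φ k - φ (k+1) := by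
    intro k
    have := hid k; have := hdiff3 k
    have h1 := sq_nonneg ‖y (k+1) - x (k+2)‖
    linarith
  -- φ converges
  have hφanti : Antitone φ := antitone_nat_of_succ_le hφdec
  obtain ⟨L, hφL⟩ : ∃ L, Tendsto φ atTop (nhds L) := by
    refine ⟨⨅ k, φ k, tendsto_atTop_ciInf hφanti ⟨0, ?_⟩⟩
    rintro r ⟨k, rfl⟩; exact hφ0 k
  -- q tends to zero
  have hφL1 : Tendsto (fun k => φ (k+1)) atTop (nhds L) :=
    (tendsto_add_atTop_iff_nat 1).2 hφL
  have hdiffz : Tendsto (fun k => φ k - φ (k+1)) atTop (nhds 0) := by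
    simpa using hφL.sub hφL1
  have hqnz : Tendsto (fun k => ‖x (k+2) - y (k+2)‖) atTop (nhds 0) := by
    have hsq : Tendsto (fun k => ‖x (k+2) - y (k+2)‖^2) atTop (nhds 0) :=
      squeeze_zero (fun k => sq_nonneg _) (fun k => hq2 k) hdiffz
    have := (Real.continuous_sqrt.tendsto 0).comp hsq
    simpa [Function.comp_def, Real.sqrt_sq (norm_nonneg _)] using this
  have hqz : Tendsto (fun k => x (k+2) - y (k+2)) atTop (nhds 0) :=
    tendsto_zero_iff_norm_tendsto_zero.2 hqnz
  have hq1z : Tendsto (fun k => x (k+1) - y (k+1)) atTop (nhds 0) := by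
    refine (tendsto_add_atTop_iff_nat 1).1 ?_
    exact hqz
  -- the b-sequence and its partial-sum bound
  set g : ℕ → ℝ := fun k => ⟪z k - x (k+1), x (k+1) - s⟫ with hg_def
  set t : ℕ → ℝ := fun k => ⟪c - x (k+1), s - x (k+1)⟫ with ht_def
  set b : ℕ → ℝ := fun k => t k + g k with hb_def
  clear_value g t b
  have hbid : ∀ k, b k = - ⟪c - z k, x (k+1) - y (k+1)⟫ := by
    intro k
    have hdec : c - x (k+1) = (c - z k) + (z k - x (k+1)) := by abel
    have h1 : t k = ⟪c - z k, s - x (k+1)⟫ + ⟪z k - x (k+1), s - x (k+1)⟫ := by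
      simp only [ht_def]; rw [hdec, inner_add_left]
    have h2 : g k = - ⟪z k - x (k+1), s - x (k+1)⟫ := by
      simp only [hg_def]; rw [← inner_neg_right]; congr 1; abel
    have h3 : ⟪c - z k, s - x (k+1)⟫
        = ⟪c - z k, s - y (k+1)⟫ + ⟪c - z k, y (k+1) - x (k+1)⟫ := by
      rw [← inner_add_right]; congr 1; abel
    have h4 : ⟪c - z k, s - y (k+1)⟫ = 0 := Qorth k s hsAff (y (k+1)) (hyA k)
    have h5 : ⟪c - z k, y (k+1) - x (k+1)⟫ = - ⟪c - z k, x (k+1) - y (k+1)⟫ := by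
      rw [← inner_neg_right]; congr 1; abel
    simp only [hb_def]
    rw [h1, h2, h3, h4, h5]; ring
  set θ : ℕ → ℝ := fun k => ‖c - z (k+1)‖^2/2 + φ k / 2 with hθ_def
  clear_value θ
  have hθ0 : ∀ k, 0 ≤ θ k := by
    intro k; have := hφ0 k; have := sq_nonneg ‖c - z (k+1)‖; simp only [hθ_def]; positivity
  have hbθ : ∀ k, b (k+1) ≤ θ k - θ (k+1) := by
    intro k
    have hcz : c - z (k+2) = (c - z (k+1)) + (x (k+2) - y (k+2)) := by rw [hz (k+1)]; abel
    have hns := norm_add_sq_real (c - z (k+1)) (x (k+2) - y (k+2))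
    rw [← hcz] at hns
    have hb := hbid (k+1)
    simp only [show k+1+1 = k+2 by omega] at hb
    have hq := hq2 k
    have h2 : (2:ℝ) * ⟪c - z (k+1), x (k+2) - y (k+2)⟫
        = ‖c - z (k+2)‖^2 - ‖c - z (k+1)‖^2 - ‖x (k+2) - y (k+2)‖^2 := by linarith
    simp only [hθ_def, show k+1+1 = k+2 by omega]
    have h3 : -⟪c - z (k+1), x (k+2) - y (k+2)⟫
        = (‖c - z (k+1)‖^2 + ‖x (k+2) - y (k+2)‖^2 - ‖c - z (k+2)‖^2)/2 := by linarith
    rw [hb, h3]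
    linarith [hq]
  -- frequently b is small
  have hfreq : ∀ ε > (0:ℝ), ∀ N, ∃ k, N ≤ k ∧ b (k+1) < ε := by
    intro ε hε N
    by_contra hcon
    push_neg at hcon
    obtain ⟨M, hM⟩ := exists_nat_gt (θ N / ε)
    have htel : (Finset.range M).sum (fun i => θ (N+i) - θ (N+i+1)) = θ N - θ (N+M) := by
      have := Finset.sum_range_sub' (fun i => θ (N+i)) M
      simpa [add_assoc] using this
    have hsum1 : (Finset.range M).sum (fun i => b (N+i+1)) ≤ θ N - θ (N+M) := by
      rw [← htel]
      exact Finset.sum_le_sum fun i _ => hbθ (N+i)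
    have hsum2 : (M:ℝ) * ε ≤ (Finset.range M).sum (fun i => b (N+i+1)) := by
      calc (M:ℝ) * ε = (Finset.range M).sum (fun _ => ε) := by
            rw [Finset.sum_const, Finset.card_range, nsmul_eq_mul]
        _ ≤ _ := Finset.sum_le_sum fun i _ => hcon (N+i) (Nat.le_add_right _ _)
    have hθNM := hθ0 (N+M)
    have : θ N < M * ε := by
      rw [div_lt_iff₀ hε] at hM; linarith
    linarith
  -- auxiliary nonnegativity in terms of g
  have hg0g : ∀ k, 0 ≤ g k := by
    intro k; rw [hg_def]; exact hg0 k
  have hynorm : ∀ k, ‖y (k+1) - s‖^2 ≤ φ k := by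
    intro k; have := hg0 k; simp only [hφ_def]; linarith
  -- boundedness of x
  obtain ⟨R, hR⟩ : ∃ R, ∀ k, x (k+2) ∈ Metric.closedBall s R := by
    refine ⟨Real.sqrt (φ 0) + Real.sqrt (φ 0), fun k => ?_⟩
    rw [Metric.mem_closedBall, dist_eq_norm]
    have h1 : ‖x (k+2) - s‖ ≤ ‖x (k+2) - y (k+2)‖ + ‖y (k+2) - s‖ :=
      norm_sub_le_norm_sub_add_norm_sub _ _ _
    have h2 : ‖x (k+2) - y (k+2)‖ ≤ Real.sqrt (φ 0) := by
      refine Real.le_sqrt_of_sq_le ?_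
      have := hq2 k
      have h3 := hφ0 (k+1)
      have h4 := hφanti (Nat.zero_le k)
      linarith
    have h5 : ‖y (k+2) - s‖ ≤ Real.sqrt (φ 0) := by
      refine Real.le_sqrt_of_sq_le ?_
      have := hynorm (k+1)
      have h4 := hφanti (Nat.zero_le (k+1))
      simp only [show k+1+1 = k+2 by omega] at this
      linarith
    linarith
  -- subsequence extraction
  have hL0 : L = 0 := by
    have hfreq' : ∀ (j N : ℕ), ∃ k, N ≤ k ∧ b (k+1) < 1/((j:ℝ)+1) := by
      intro j N; exact hfreq (1/((j:ℝ)+1)) (by positivity) N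
    choose F hF1 hF2 using hfreq'
    set σ : ℕ → ℕ := fun j => Nat.rec (F 0 0) (fun j prev => F (j+1) (prev+1)) j with hσ_def
    have hσsucc : ∀ j, σ (j+1) = F (j+1) (σ j + 1) := fun j => rfl
    have hσmono : StrictMono σ := by
      apply strictMono_nat_of_lt_succ
      intro j
      rw [hσsucc j]
      have := hF1 (j+1) (σ j + 1)
      omega
    have hσb : ∀ j, b (σ j + 1) < 1/((j:ℝ)+1) := by
      intro j
      cases j with
      | zero => exact hF2 0 0
      | succ j => rw [hσsucc]; exact hF2 (j+1) (σ j + 1)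
    obtain ⟨a, _, ρ, hρmono, hρconv⟩ :=
      (isCompact_closedBall s R).tendsto_subseq (fun j => hR (σ j))
    set τ : ℕ → ℕ := fun j => σ (ρ j) with hτ_def
    have hτmono : StrictMono τ := hσmono.comp hρmono
    have hxconv : Tendsto (fun j => x (τ j + 2)) atTop (nhds a) := hρconv
    have hqτ : Tendsto (fun j => x (τ j + 2) - y (τ j + 2)) atTop (nhds 0) :=
      hqz.comp hτmono.tendsto_atTop
    have hyconv : Tendsto (fun j => y (τ j + 2)) atTop (nhds a) := by
      have := hxconv.sub hqτ
      simpa using this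
    have haK : a ∈ K :=
      hKcl.mem_of_tendsto hxconv (Filter.Eventually.of_forall fun j => hxK (τ j + 1))
    have haA : a ∈ Aff :=
      hAffCl.mem_of_tendsto hyconv (Filter.Eventually.of_forall fun j => hyA (τ j + 1))
    have htconv : Tendsto (fun j => t (τ j + 1)) atTop (nhds ⟪c - a, s - a⟫) := by
      have h1 : Tendsto (fun j => ⟪c - x (τ j + 2), s - x (τ j + 2)⟫) atTop
          (nhds ⟪c - a, s - a⟫) :=
        (tendsto_const_nhds.sub hxconv).inner (tendsto_const_nhds.sub hxconv)
      convert h1 using 2 with j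
      rw [ht_def]
    have h1j : Tendsto (fun j : ℕ => 1/((j:ℝ)+1)) atTop (nhds 0) :=
      tendsto_one_div_add_atTop_nhds_zero_nat
    have hbub : ∀ j, b (τ j + 1) < 1/((j:ℝ)+1) := by
      intro j
      refine lt_of_lt_of_le (hσb (ρ j)) ?_
      have hle : j ≤ ρ j := hρmono.le_apply
      have hj : (j:ℝ) + 1 ≤ (ρ j : ℝ) + 1 := by exact_mod_cast Nat.succ_le_succ hle
      exact one_div_le_one_div_of_le (by positivity) hj
    have htb : ∀ j, t (τ j + 1) ≤ b (τ j + 1) := by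
      intro j
      have := hg0g (τ j + 1)
      rw [hb_def]
      simp only
      linarith
    have hta : ⟪c - a, s - a⟫ ≤ 0 := by
      refine le_of_tendsto_of_tendsto' htconv h1j fun j => ?_
      exact le_of_lt (lt_of_le_of_lt (htb j) (hbub j))
    have hvia : ⟪c - s, a - s⟫ ≤ 0 := hVI a ⟨haK, haA⟩
    have has : a = s := by
      have e1 : ⟪c - s, a - s⟫ = -⟪c - s, s - a⟫ := by
        rw [← inner_neg_right]; congr 1; abel
      have e2 : ⟪c - a, s - a⟫ - ⟪c - s, s - a⟫ = ⟪s - a, s - a⟫ := by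
        rw [← inner_sub_left]; congr 1; abel
      have e3 : ⟪s - a, s - a⟫ = ‖s - a‖^2 := real_inner_self_eq_norm_sq _
      have e4 : ‖s - a‖^2 ≤ 0 := by linarith
      have e5 : ‖s - a‖^2 = 0 := le_antisymm e4 (sq_nonneg _)
      have e6 : ‖s - a‖ = 0 := by
        have := pow_eq_zero_iff (n := 2) (by norm_num) |>.1 e5
        exact this
      have e7 : s - a = 0 := norm_eq_zero.1 e6
      exact (sub_eq_zero.1 e7).symm
    have ht0 : Tendsto (fun j => t (τ j + 1)) atTop (nhds 0) := by
      rw [has] at htconv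
      simpa using htconv
    have hgτ : Tendsto (fun j => g (τ j + 1)) atTop (nhds 0) := by
      have hub : ∀ j, g (τ j + 1) ≤ 1/((j:ℝ)+1) - t (τ j + 1) := by
        intro j
        have h := hbub j
        have hb' : b (τ j + 1) = t (τ j + 1) + g (τ j + 1) := by rw [hb_def]
        linarith
      refine squeeze_zero (fun j => hg0g _) hub ?_
      simpa using h1j.sub ht0
    have hyns : Tendsto (fun j => ‖y (τ j + 2) - s‖^2) atTop (nhds 0) := by
      rw [has] at hyconv
      have h1 := (hyconv.sub (tendsto_const_nhds (x := s))).norm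
      have h2 := h1.pow 2
      simpa using h2
    have hφτ0 : Tendsto (fun j => φ (τ j + 1)) atTop (nhds 0) := by
      have heq : ∀ j, φ (τ j + 1) = ‖y (τ j + 1 + 1) - s‖^2 + 2 * g (τ j + 1) := by
        intro j; simp only [hφ_def, hg_def]
      have h2 : Tendsto (fun j => ‖y (τ j + 1 + 1) - s‖^2 + 2 * g (τ j + 1)) atTop (nhds 0) := by
        have := hyns.add (hgτ.const_mul 2)
        simpa [show ∀ i:ℕ, i+1+1 = i+2 from fun i => rfl] using this
      exact h2.congr fun j => (heq j).symm
    have hτ1mono : StrictMono (fun j => τ j + 1) := fun p q h => Nat.add_lt_add_right (hτmono h) 1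
    have hφτL : Tendsto (fun j => φ (τ j + 1)) atTop (nhds L) := hφL.comp hτ1mono.tendsto_atTop
    exact tendsto_nhds_unique hφτL hφτ0
  -- conclusion
  have hyz : Tendsto (fun k => y (k+1)) atTop (nhds s) := by
    have hφ00 : Tendsto φ atTop (nhds 0) := by rwa [hL0] at hφL
    have hsq : Tendsto (fun k => ‖y (k+1) - s‖^2) atTop (nhds 0) :=
      squeeze_zero (fun k => sq_nonneg _) hynorm hφ00
    have hn : Tendsto (fun k => ‖y (k+1) - s‖) atTop (nhds 0) := by
      have := (Real.continuous_sqrt.tendsto 0).comp hsq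
      simpa [Function.comp_def, Real.sqrt_sq (norm_nonneg _)] using this
    have h0 : Tendsto (fun k => y (k+1) - s) atTop (nhds 0) :=
      tendsto_zero_iff_norm_tendsto_zero.2 hn
    have := h0.add (tendsto_const_nhds (x := s))
    simpa using this
  have hxz : Tendsto (fun k => x (k+1)) atTop (nhds s) := by
    have : (fun k => x (k+1)) = fun k => (x (k+1) - y (k+1)) + y (k+1) := by
      funext k; abel
    rw [this]
    simpa using hq1z.add hyz
  exact (tendsto_add_atTop_iff_nat 1).1 hxz
end

section
/- (Convergence of alternating projections for convex sets.) Let K and P be nonempty closed convex subsets of ℝⁿ with K ∩ P ≠ ∅. Given y₀ ∈ ℝⁿ, define x_{k+1} = proj_K(y_k) and y_{k+1} = proj_P(x_{k+1}) for k ≥ 0. Then the sequences (x_k) and (y_k) converge to a common limit belonging to K ∩ P. -/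
open RealInnerProductSpace Filter Topology

lemma proj_sq_ineq {E : Type*} [NormedAddCommGroup E] [InnerProductSpace ℝ E]
    {S : Set E} (hconv : Convex ℝ S) {w p z : E} (hp : p ∈ S) (hz : z ∈ S)
    (hmin : ∀ v ∈ S, ‖w - p‖ ≤ ‖w - v‖) :
    ‖p - z‖ ^ 2 + ‖w - p‖ ^ 2 ≤ ‖w - z‖ ^ 2 := by
  have hne : Nonempty S := ⟨⟨p, hp⟩⟩
  have heq : ‖w - p‖ = ⨅ v : S, ‖w - v‖ :=
    le_antisymm (le_ciInf fun v => hmin v v.2)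
      (ciInf_le (f := fun v : S => ‖w - v‖) ⟨0, fun _ ⟨v, hv⟩ => hv ▸ norm_nonneg _⟩ ⟨p, hp⟩)
  have hip : ⟪w - p, z - p⟫ ≤ 0 :=
    (norm_eq_iInf_iff_real_inner_le_zero hconv hp).mp heq z hz
  have h1 : ‖(w - p) - (z - p)‖ ^ 2 = ‖w - p‖^2 - 2 * ⟪w - p, z - p⟫ + ‖z - p‖^2 :=
    norm_sub_sq_real _ _
  have h2 : (w - p) - (z - p) = w - z := by abel
  have h3 : ‖p - z‖ = ‖z - p‖ := norm_sub_rev _ _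
  rw [h2] at h1
  rw [h3]
  linarith

lemma sq_le_aux {a b : ℝ} (ha : 0 ≤ a) (hb : 0 ≤ b) (h : a^2 ≤ b^2) : a ≤ b := by
  have := Real.sqrt_le_sqrt h
  rwa [Real.sqrt_sq ha, Real.sqrt_sq hb] at this



/-- Convergence of plain alternating projections: for nonempty closed convex sets
`K, P ⊆ ℝⁿ` with `K ∩ P ≠ ∅`, the sequences `x (k+1) = proj_K (y k)` and
`y (k+1) = proj_P (x (k+1))` converge to a common limit in `K ∩ P`. -/
theorem alternating_projections_convergence
    {n : ℕ} (K P : Set (EuclideanSpace ℝ (Fin n)))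
    (hKne : K.Nonempty) (hKcl : IsClosed K) (hKconv : Convex ℝ K)
    (hPne : P.Nonempty) (hPcl : IsClosed P) (hPconv : Convex ℝ P)
    (hKP : (K ∩ P).Nonempty)
    (projK projP : EuclideanSpace ℝ (Fin n) → EuclideanSpace ℝ (Fin n))
    (hprojK : ∀ w, projK w ∈ K ∧ ∀ v ∈ K, ‖w - projK w‖ ≤ ‖w - v‖)
    (hprojP : ∀ w, projP w ∈ P ∧ ∀ v ∈ P, ‖w - projP w‖ ≤ ‖w - v‖)
    (x y : ℕ → EuclideanSpace ℝ (Fin n))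
    (hx : ∀ k, x (k + 1) = projK (y k))
    (hy : ∀ k, y (k + 1) = projP (x (k + 1))) :
    ∃ l ∈ K ∩ P, Filter.Tendsto x Filter.atTop (nhds l) ∧
      Filter.Tendsto y Filter.atTop (nhds l) := by
  obtain ⟨z, hzK, hzP⟩ := hKP
  have hK' : ∀ k, x (k+1) ∈ K ∧ ∀ v ∈ K, ‖y k - x (k+1)‖ ≤ ‖y k - v‖ := by
    intro k; have h := hprojK (y k); rwa [← hx k] at h
  have hP' : ∀ k, y (k+1) ∈ P ∧ ∀ v ∈ P, ‖x (k+1) - y (k+1)‖ ≤ ‖x (k+1) - v‖ := by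
    intro k; have h := hprojP (x (k+1)); rwa [← hy k] at h
  have key1 : ∀ q ∈ K, ∀ k, ‖x (k+1) - q‖^2 + ‖y k - x (k+1)‖^2 ≤ ‖y k - q‖^2 :=
    fun q hq k => proj_sq_ineq hKconv (hK' k).1 hq (hK' k).2
  have key2 : ∀ q ∈ P, ∀ k, ‖y (k+1) - q‖^2 + ‖x (k+1) - y (k+1)‖^2 ≤ ‖x (k+1) - q‖^2 :=
    fun q hq k => proj_sq_ineq hPconv (hP' k).1 hq (hP' k).2
  -- Fejér monotonicity of ‖y k - q‖ for q ∈ K ∩ P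
  have mono : ∀ q, q ∈ K → q ∈ P → Antitone fun k => ‖y k - q‖ := by
    intro q hqK hqP
    apply antitone_nat_of_succ_le
    intro k
    have h1 := key1 q hqK k
    have h2 := key2 q hqP k
    refine sq_le_aux (norm_nonneg _) (norm_nonneg _) ?_
    nlinarith [sq_nonneg ‖y k - x (k+1)‖, sq_nonneg ‖x (k+1) - y (k+1)‖]
  -- the squared distances to z converge
  have hanti : Antitone fun k => ‖y k - z‖ ^ 2 := by
    intro a b hab
    have := mono z hzK hzP hab
    exact pow_le_pow_left₀ (norm_nonneg _) this 2
  have hbdd : BddBelow (Set.range fun k => ‖y k - z‖ ^ 2) := by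
    refine ⟨0, ?_⟩; rintro _ ⟨k, rfl⟩; positivity
  have hconv_s : Tendsto (fun k => ‖y k - z‖ ^ 2) atTop (𝓝 (⨅ k, ‖y k - z‖ ^ 2)) :=
    tendsto_atTop_ciInf hanti hbdd
  have hdiff : Tendsto (fun k => ‖y k - z‖ ^ 2 - ‖y (k+1) - z‖ ^ 2) atTop (𝓝 0) := by
    have := hconv_s.sub ((tendsto_add_atTop_iff_nat 1).mpr hconv_s)
    simpa using this
  -- the increments tend to 0
  have hd1 : Tendsto (fun k => ‖y k - x (k+1)‖ ^ 2) atTop (𝓝 0) := by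
    apply squeeze_zero (fun k => by positivity) (fun k => ?_) hdiff
    have h1 := key1 z hzK k
    have h2 := key2 z hzP k
    nlinarith [sq_nonneg ‖x (k+1) - y (k+1)‖]
  have hd2 : Tendsto (fun k => ‖x (k+1) - y (k+1)‖ ^ 2) atTop (𝓝 0) := by
    apply squeeze_zero (fun k => by positivity) (fun k => ?_) hdiff
    have h1 := key1 z hzK k
    have h2 := key2 z hzP k
    nlinarith [sq_nonneg ‖y k - x (k+1)‖]
  have hd1' : Tendsto (fun k => ‖y k - x (k+1)‖) atTop (𝓝 0) := by
    have := hd1.sqrt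
    simpa [Real.sqrt_sq (norm_nonneg _)] using this
  -- a convergent subsequence of y
  have hball : ∀ k, y k ∈ Metric.closedBall z ‖y 0 - z‖ := by
    intro k
    rw [Metric.mem_closedBall, dist_eq_norm]
    exact mono z hzK hzP (Nat.zero_le k)
  obtain ⟨l, hl, φ, hφ, hyl⟩ :=
    (isCompact_closedBall z ‖y 0 - z‖).tendsto_subseq hball
  -- l ∈ P
  have hyPm : ∀ m, 1 ≤ m → y m ∈ P := by
    intro m hm
    obtain ⟨k, rfl⟩ := Nat.exists_eq_add_of_le hm
    rw [add_comm]
    exact (hP' k).1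
  have hlP : l ∈ P := by
    refine hPcl.mem_of_tendsto hyl ?_
    filter_upwards [eventually_ge_atTop 1] with j hj
    exact hyPm (φ j) (le_trans hj (hφ.le_apply))
  -- l ∈ K
  have hxl : Tendsto (fun j => x (φ j + 1)) atTop (𝓝 l) := by
    have hsub : Tendsto (fun j => y (φ j) - x (φ j + 1)) atTop (𝓝 0) := by
      rw [tendsto_zero_iff_norm_tendsto_zero]
      exact hd1'.comp hφ.tendsto_atTop
    have := hyl.sub hsub
    simpa using this
  have hlK : l ∈ K := hKcl.mem_of_tendsto hxl (Eventually.of_forall fun j => (hK' (φ j)).1)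
  -- whole sequence converges to l
  have hanti_l : Antitone fun k => ‖y k - l‖ := mono l hlK hlP
  have hbdd_l : BddBelow (Set.range fun k => ‖y k - l‖) := by
    refine ⟨0, ?_⟩; rintro _ ⟨k, rfl⟩; positivity
  have hconv_l : Tendsto (fun k => ‖y k - l‖) atTop (𝓝 (⨅ k, ‖y k - l‖)) :=
    tendsto_atTop_ciInf hanti_l hbdd_l
  have hsub_l : Tendsto (fun j => ‖y (φ j) - l‖) atTop (𝓝 0) := by
    have : Tendsto (fun j => y (φ j) - l) atTop (𝓝 (l - l)) := hyl.sub_const l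
    rw [sub_self] at this
    exact tendsto_zero_iff_norm_tendsto_zero.mp this
  have hinf0 : (⨅ k, ‖y k - l‖) = 0 :=
    tendsto_nhds_unique (hconv_l.comp hφ.tendsto_atTop) hsub_l
  have hyto : Tendsto y atTop (𝓝 l) := by
    rw [tendsto_iff_norm_sub_tendsto_zero]
    rw [hinf0] at hconv_l
    exact hconv_l
  have hxto : Tendsto x atTop (𝓝 l) := by
    rw [← tendsto_add_atTop_iff_nat 1, tendsto_iff_norm_sub_tendsto_zero]
    apply squeeze_zero (fun k => norm_nonneg _) (fun k => ?_) ((tendsto_iff_norm_sub_tendsto_zero.mp hyto))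
    refine sq_le_aux (norm_nonneg _) (norm_nonneg _) ?_
    have := key1 l hlK k
    nlinarith [sq_nonneg ‖y k - x (k+1)‖]
  exact ⟨l, ⟨hlK, hlP⟩, hxto, hyto⟩
end

section
/- (Lovász sandwich theorem.) Let G be a finite simple graph on vertex set {1,…,n}, let α(G) be its independence (stable) number and let χ(Ḡ) be the chromatic number of its complement graph Ḡ. Define ϑ(G) = sup{ ∑_{i,j=1}^n X_{ij} : X real symmetric n×n, X positive semidefinite, trace(X) = 1, and X_{ij} = 0 whenever {i,j} is an edge of G }. Then α(G) ≤ ϑ(G) ≤ χ(Ḡ). -/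
/-- Lovász sandwich theorem: for a finite simple graph `G` on `n` vertices, the
independence number `α(G)` (the largest cardinality of a clique of the complement
graph) and the chromatic number `χ(Ḡ)` of the complement graph satisfy
`α(G) ≤ ϑ(G) ≤ χ(Ḡ)`, where
`ϑ(G) = sup { ∑ᵢⱼ Xᵢⱼ : X ⪰ 0, trace X = 1, Xᵢⱼ = 0 whenever {i,j} ∈ E(G) }`. -/
theorem lovasz_sandwich
    (n : ℕ) (G : SimpleGraph (Fin n)) (alpha chi : ℕ)
    (halpha : IsGreatest {k : ℕ | ∃ s : Finset (Fin n),
        Gᶜ.IsClique (s : Set (Fin n)) ∧ s.card = k} alpha)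
    (hchi : Gᶜ.chromaticNumber = (chi : ℕ∞))
    (theta : ℝ)
    (htheta : theta = sSup {v : ℝ | ∃ X : Matrix (Fin n) (Fin n) ℝ,
        X.PosSemidef ∧ Matrix.trace X = 1 ∧
        (∀ i j, G.Adj i j → X i j = 0) ∧ v = ∑ i, ∑ j, X i j}) :
    (alpha : ℝ) ≤ theta ∧ theta ≤ (chi : ℝ) := by
  subst htheta
  set S : Set ℝ := {v : ℝ | ∃ X : Matrix (Fin n) (Fin n) ℝ,
        X.PosSemidef ∧ Matrix.trace X = 1 ∧
        (∀ i j, G.Adj i j → X i j = 0) ∧ v = ∑ i, ∑ j, X i j} with hS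
  obtain ⟨C⟩ : Gᶜ.Colorable chi := by
    rw [← SimpleGraph.chromaticNumber_le_iff_colorable, hchi]
  -- every feasible value is nonnegative
  have hnonneg : ∀ v ∈ S, 0 ≤ v := by
    rintro v ⟨X, hpsd, htr, hedge, rfl⟩
    have h := hpsd.dotProduct_mulVec_nonneg (fun _ => (1:ℝ))
    simpa [dotProduct, Matrix.mulVec] using h
  -- every feasible value is at most chi
  have hub : ∀ v ∈ S, v ≤ (chi : ℝ) := by
    rintro v ⟨X, hpsd, htr, hedge, rfl⟩
    have hn : 0 < n := by
      rcases Nat.eq_zero_or_pos n with h | h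
      · subst h; simp [Matrix.trace] at htr
      · exact h
    have hchi1 : 0 < chi := by
      rcases Nat.eq_zero_or_pos chi with h | h
      · subst h; exact (C ⟨0, hn⟩).elim0
      · exact h
    have hchiR : (0:ℝ) < chi := by exact_mod_cast hchi1
    set w : Fin chi → Fin n → ℝ :=
      fun k i => (if C i = k then (chi:ℝ) else 0) - 1 with hw
    have e1 : ∀ i : Fin n, ∑ k : Fin chi, (if C i = k then (chi:ℝ) else 0) = chi := by
      intro i; simp [Finset.sum_ite_eq]
    have e2 : ∀ i j : Fin n,
        ∑ k : Fin chi, (if C i = k then (chi:ℝ) else 0) * (if C j = k then (chi:ℝ) else 0)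
          = (chi:ℝ) * chi * (if C i = C j then 1 else 0) := by
      intro i j
      have hterm : ∀ k : Fin chi,
          (if C i = k then (chi:ℝ) else 0) * (if C j = k then (chi:ℝ) else 0)
            = if C i = k then (if C i = C j then (chi:ℝ) * chi else 0) else 0 := by
        intro k
        by_cases h1 : C i = k
        · by_cases h2 : C j = k
          · simp only [if_pos h1, if_pos h2, if_pos (h1.trans h2.symm)]
          · have h3 : ¬ C i = C j := fun h => h2 (h.symm.trans h1)
            simp only [if_pos h1, if_neg h2, if_neg h3, mul_zero]
        · simp only [if_neg h1, zero_mul]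
      rw [Finset.sum_congr rfl fun k _ => hterm k, Finset.sum_ite_eq,
        if_pos (Finset.mem_univ _)]
      split_ifs <;> ring
    have key : ∀ i j : Fin n,
        (∑ k, w k i * w k j) = (chi:ℝ) * chi * (if C i = C j then 1 else 0) - chi := by
      intro i j
      have hterm : ∀ k : Fin chi, w k i * w k j =
          (if C i = k then (chi:ℝ) else 0) * (if C j = k then (chi:ℝ) else 0)
            - (if C i = k then (chi:ℝ) else 0) - (if C j = k then (chi:ℝ) else 0) + 1 := by
        intro k; simp only [hw]; ring
      rw [Finset.sum_congr rfl fun k _ => hterm k, Finset.sum_add_distrib,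
        Finset.sum_sub_distrib, Finset.sum_sub_distrib, e2 i j, e1 i, e1 j,
        Finset.sum_const, Finset.card_univ, Fintype.card_fin, nsmul_eq_mul, mul_one]
      ring
    -- trace-type identity
    have hT : ∀ i, ∑ j, X i j * (if C i = C j then 1 else 0) = X i i := by
      intro i
      rw [Finset.sum_eq_single i]
      · simp
      · intro j _ hji
        by_cases hc : C i = C j
        · have hnadj : ¬ Gᶜ.Adj i j := fun h => C.valid h hc
          rw [SimpleGraph.compl_adj] at hnadj
          push_neg at hnadj
          have hadj : G.Adj i j := hnadj (fun h => hji h.symm)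
          simp [hedge i j hadj]
        · simp [hc]
      · intro h; exact absurd (Finset.mem_univ i) h
    -- the quadratic form inequality
    have hquad : 0 ≤ ∑ k : Fin chi, ∑ i, w k i * ∑ j, X i j * w k j := by
      apply Finset.sum_nonneg
      intro k _
      have h := hpsd.dotProduct_mulVec_nonneg (w k)
      simpa [dotProduct, Matrix.mulVec] using h
    have hswap : ∑ k : Fin chi, ∑ i, w k i * ∑ j, X i j * w k j
        = ∑ i, ∑ j, X i j * ∑ k, w k i * w k j := by
      simp_rw [Finset.mul_sum]
      rw [Finset.sum_comm]
      congr 1; ext i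
      rw [Finset.sum_comm]
      congr 1; ext j
      congr 1; ext k
      ring
    have hval : ∑ i, ∑ j, X i j * ∑ k, w k i * w k j
        = (chi:ℝ) * chi - chi * (∑ i, ∑ j, X i j) := by
      have hterm2 : ∀ i j, X i j * ∑ k, w k i * w k j
          = (chi:ℝ) * chi * (X i j * (if C i = C j then 1 else 0)) - chi * X i j := by
        intro i j; rw [key i j]; ring
      simp_rw [hterm2, Finset.sum_sub_distrib, ← Finset.mul_sum, hT]
      have htr' : ∑ i, X i i = 1 := by simpa [Matrix.trace, Matrix.diag] using htr
      rw [htr']; ring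
    have h0 : 0 ≤ (chi:ℝ) * chi - chi * (∑ i, ∑ j, X i j) := by
      rw [← hval, ← hswap]; exact hquad
    nlinarith [h0, hchiR]
  constructor
  · -- lower bound : alpha ≤ sSup S
    rcases Nat.eq_zero_or_pos alpha with h0 | hpos
    · subst h0
      simpa using Real.sSup_nonneg hnonneg
    obtain ⟨s, hs, hcard⟩ := halpha.1
    have hαR : (0:ℝ) < alpha := by exact_mod_cast hpos
    have hαne : (alpha : ℝ) ≠ 0 := hαR.ne'
    set a : ℝ := (alpha : ℝ)⁻¹ with ha
    have hapos : 0 ≤ a := by positivity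
    set X : Matrix (Fin n) (Fin n) ℝ :=
      Matrix.of fun i j => if i ∈ s ∧ j ∈ s then a else 0 with hX
    have hrow : ∀ (x : Fin n → ℝ) (i : Fin n),
        ∑ j, X i j * x j = if i ∈ s then a * ∑ j ∈ s, x j else 0 := by
      intro x i
      by_cases hi : i ∈ s
      · rw [if_pos hi]
        simp only [hX, Matrix.of_apply, hi, true_and, ite_mul, zero_mul]
        rw [Finset.sum_ite_mem, Finset.univ_inter, Finset.mul_sum]
      · rw [if_neg hi]; simp [hX, hi]
    have hmem : (alpha : ℝ) ∈ S := by
      refine ⟨X, Matrix.PosSemidef.of_dotProduct_mulVec_nonneg ?_ ?_, ?_, ?_, ?_⟩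
      · ext i j
        simp [hX, Matrix.conjTranspose_apply, and_comm]
      · intro x
        have hq : dotProduct (star x) (X.mulVec x) = a * (∑ j ∈ s, x j) ^ 2 := by
          simp only [dotProduct, Matrix.mulVec, star_trivial, Pi.star_apply,
            star_trivial]
          have hterm : ∀ i, x i * ∑ j, X i j * x j
              = if i ∈ s then x i * (a * ∑ j ∈ s, x j) else 0 := by
            intro i; rw [hrow x i]; split_ifs <;> simp
          calc ∑ i, x i * ∑ j, X i j * x j
              = ∑ i, if i ∈ s then x i * (a * ∑ j ∈ s, x j) else 0 :=
                Finset.sum_congr rfl fun i _ => hterm i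
            _ = ∑ i ∈ s, x i * (a * ∑ j ∈ s, x j) := by
                rw [Finset.sum_ite_mem, Finset.univ_inter]
            _ = (∑ i ∈ s, x i) * (a * ∑ j ∈ s, x j) := by rw [Finset.sum_mul]
            _ = a * (∑ j ∈ s, x j) ^ 2 := by ring
        rw [hq]
        exact mul_nonneg hapos (sq_nonneg _)
      · have htr : Matrix.trace X = ∑ i, X i i := by simp [Matrix.trace, Matrix.diag]
        rw [htr]
        simp only [hX, Matrix.of_apply, and_self]
        rw [Finset.sum_ite_mem, Finset.univ_inter, Finset.sum_const, hcard,
          nsmul_eq_mul, ha, mul_inv_cancel₀ hαne]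
      · intro i j hadj
        simp only [hX, Matrix.of_apply, ite_eq_right_iff, and_imp]
        intro hi hj
        have hadj' : Gᶜ.Adj i j := hs hi hj hadj.ne
        rw [SimpleGraph.compl_adj] at hadj'
        exact absurd hadj hadj'.2
      · have hsum : ∀ i, ∑ j, X i j = if i ∈ s then a * s.card else 0 := by
          intro i
          have h1 := hrow (fun _ => 1) i
          simp only [mul_one, Finset.sum_const, nsmul_eq_mul] at h1
          exact h1
        rw [Finset.sum_congr rfl fun i _ => hsum i, Finset.sum_ite_mem,
          Finset.univ_inter, Finset.sum_const, hcard, nsmul_eq_mul, ha]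
        field_simp
    exact le_csSup ⟨chi, hub⟩ hmem
  · exact Real.sSup_le hub (by positivity)
end
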